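/- arXiv:2204.05664 — 7 statements merged into one kernel-verified Lean document; each statement's English description precedes it below -/
import Mathlib

section
/- For all integers n and k with k > 1 and n ≥ k(k+1), the total Roman domination number of the Kneser graph K_{n,k} equals 2(k+1), i.e. γ_tR(K_{n,k}) = 2(k+1). -/
def kneserGraph (n k : ℕ) : SimpleGraph {s : Finset (Fin n) // s.card = k} where
  Adj a b := a ≠ b ∧ Disjoint a.1 b.1
  symm := ⟨fun a b h => ⟨h.1.symm, h.2.symm⟩⟩
  loopless := ⟨fun a h => h.1 rfl⟩

def IsRDF {V : Type*} (G : SimpleGraph V) (f : V → ℕ) : Prop :=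
  (∀ v, f v ≤ 2) ∧ ∀ v, f v = 0 → ∃ u, G.Adj v u ∧ f u = 2

noncomputable def romanDomNum {V : Type*} [Fintype V] (G : SimpleGraph V) : ℕ :=
  sInf {w | ∃ f, IsRDF G f ∧ ∑ v, f v = w}

open Classical in
def IsTRDF {V : Type*} [Fintype V] (G : SimpleGraph V) (f : V → ℕ) : Prop :=
  IsRDF G f ∧ ∀ v, 1 ≤ ∑ u ∈ Finset.univ.filter (fun u => G.Adj v u), f u

noncomputable def totalRomanDomNum {V : Type*} [Fintype V] (G : SimpleGraph V) : ℕ :=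
  sInf {w | ∃ f, IsTRDF G f ∧ ∑ v, f v = w}

open Classical in
def IsSRDF {V : Type*} [Fintype V] (G : SimpleGraph V) (f : V → ℤ) : Prop :=
  (∀ v, f v = -1 ∨ f v = 1 ∨ f v = 2) ∧
  (∀ v, f v = -1 → ∃ u, G.Adj v u ∧ f u = 2) ∧
  (∀ v, 1 ≤ f v + ∑ u ∈ Finset.univ.filter (fun u => G.Adj v u), f u)

noncomputable def signedRomanDomNum {V : Type*} [Fintype V] (G : SimpleGraph V) : ℤ :=
  sInf {w | ∃ f, IsSRDF G f ∧ ∑ v, f v = w}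

def IsDominatingSet {V : Type*} (G : SimpleGraph V) (S : Finset V) : Prop :=
  ∀ v, v ∉ S → ∃ u ∈ S, G.Adj v u

noncomputable def domNum {V : Type*} [Fintype V] (G : SimpleGraph V) : ℕ :=
  sInf {m | ∃ S : Finset V, IsDominatingSet G S ∧ S.card = m}



open Finset in
-- transversal lemma
lemma exists_transversal {n k : ℕ} :
    ∀ (𝒜 : Finset (Finset (Fin n))), (∀ A ∈ 𝒜, k ≤ A.card) → 𝒜.card ≤ k →
    ∃ T : Finset (Fin n), T.card = 𝒜.card ∧ (∀ A ∈ 𝒜, (T ∩ A).Nonempty) ∧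
      (∀ x ∈ T, ∃ A ∈ 𝒜, x ∈ A) := by
  intro 𝒜
  induction 𝒜 using Finset.induction_on with
  | empty => exact fun _ _ => ⟨∅, by simp⟩
  | @insert A 𝒜 hA ih =>
    intro hcard ht
    rw [Finset.card_insert_of_notMem hA] at ht
    obtain ⟨T, hTcard, hTmeet, hTmem⟩ := ih (fun B hB => hcard B (mem_insert_of_mem hB))
      (Nat.le_of_succ_le ht)
    have hAT : ¬ A ⊆ T := by
      intro hsub
      have := Finset.card_le_card hsub
      have hkA := hcard A (mem_insert_self _ _)
      omega
    obtain ⟨a, haA, haT⟩ := Finset.not_subset.mp hAT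
    refine ⟨insert a T, ?_, ?_, ?_⟩
    · rw [Finset.card_insert_of_notMem haT, hTcard, Finset.card_insert_of_notMem hA]
    · intro B hB
      rcases Finset.mem_insert.mp hB with rfl | hB
      · exact ⟨a, Finset.mem_inter.mpr ⟨mem_insert_self _ _, haA⟩⟩
      · obtain ⟨x, hx⟩ := hTmeet B hB
        rw [Finset.mem_inter] at hx
        exact ⟨x, Finset.mem_inter.mpr ⟨mem_insert_of_mem hx.1, hx.2⟩⟩
    · intro x hx
      rcases Finset.mem_insert.mp hx with rfl | hx
      · exact ⟨A, mem_insert_self _ _, haA⟩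
      · obtain ⟨B, hB, hxB⟩ := hTmem x hx
        exact ⟨B, mem_insert_of_mem hB, hxB⟩

open Finset in
lemma family_from_base {n k : ℕ} (hk : 0 < k) (hkn : k ≤ n)
    (𝒜 : Finset (Finset (Fin n))) (B : Finset (Fin n)) (hB : B.card = k - 1)
    (hmeet : ∀ A ∈ 𝒜, (B ∩ A).Nonempty) :
    ∃ 𝔽 : Finset (Finset (Fin n)), n - k + 1 ≤ 𝔽.card ∧
      ∀ S ∈ 𝔽, S.card = k ∧ B ⊆ S ∧ ∀ A ∈ 𝒜, ¬ Disjoint S A := by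
  classical
  have hinj : Set.InjOn (fun x => insert x B) (univ \ B : Finset (Fin n)) := by
    intro x hx y hy hxy
    simp only [Finset.coe_sdiff, Finset.coe_univ, Set.mem_diff, Finset.mem_coe] at hx hy
    have hxy' : insert x B = insert y B := hxy
    have : x ∈ insert y B := hxy' ▸ Finset.mem_insert_self x B
    rcases Finset.mem_insert.mp this with h | h
    · exact h
    · exact absurd h hx.2
  refine ⟨(univ \ B).image (fun x => insert x B), ?_, ?_⟩
  · rw [Finset.card_image_of_injOn hinj, Finset.card_sdiff_of_subset (Finset.subset_univ B),
      Finset.card_univ, Fintype.card_fin, hB]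
    omega
  · intro S hS
    obtain ⟨x, hx, rfl⟩ := Finset.mem_image.mp hS
    simp only [Finset.mem_sdiff, Finset.mem_univ, true_and] at hx
    refine ⟨?_, Finset.subset_insert x B, ?_⟩
    · rw [Finset.card_insert_of_notMem hx, hB]; omega
    · intro A hA
      obtain ⟨y, hy⟩ := hmeet A hA
      rw [Finset.mem_inter] at hy
      exact Finset.not_disjoint_iff.mpr ⟨y, Finset.mem_insert_of_mem hy.1, hy.2⟩

open Finset in
lemma count_meets {n k : ℕ} (hk : 1 < k) (hn : k * (k + 1) ≤ n)
    (𝒜 : Finset (Finset (Fin n))) (hcard : ∀ A ∈ 𝒜, A.card = k) (ht : 𝒜.card ≤ k) :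
    ∃ 𝔽 : Finset (Finset (Fin n)), 2 * k + 2 - 𝒜.card ≤ 𝔽.card ∧
      ∀ S ∈ 𝔽, S.card = k ∧ ∀ A ∈ 𝒜, ¬ Disjoint S A := by
  classical
  have hkk : k * k + k ≤ n := by nlinarith
  have hkn : k ≤ n := by nlinarith
  have hcardn : Fintype.card (Fin n) = n := Fintype.card_fin n
  rcases Nat.eq_zero_or_pos 𝒜.card with h0 | hpos
  · -- t = 0 : need 2k+2 sets; meeting conditions vacuous
    have h𝒜 : 𝒜 = ∅ := Finset.card_eq_zero.mp h0
    subst h𝒜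
    obtain ⟨C, -, hC⟩ := Finset.exists_superset_card_eq (s := (∅ : Finset (Fin n)))
      (by simp) (by omega : k - 1 ≤ Fintype.card (Fin n))
    obtain ⟨𝔽, h𝔽card, h𝔽⟩ := family_from_base (by omega) hkn ∅ C hC (by simp)
    have hCc : k ≤ (univ \ C).card := by
      rw [Finset.card_sdiff_of_subset (Finset.subset_univ C), Finset.card_univ, hcardn, hC]
      have : 2 * k ≤ n := by nlinarith
      omega
    obtain ⟨D, hDsub, hD⟩ := Finset.exists_subset_card_eq hCc
    have hDnot : D ∉ 𝔽 := by
      intro hmem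
      obtain ⟨-, hCD, -⟩ := h𝔽 D hmem
      have hCne : C.Nonempty := Finset.card_pos.mp (by omega)
      obtain ⟨c, hc⟩ := hCne
      have : c ∈ univ \ C := hDsub (hCD hc)
      simp at this
      exact this hc
    refine ⟨insert D 𝔽, ?_, ?_⟩
    · rw [Finset.card_insert_of_notMem hDnot]
      have : 3 * k ≤ n := by nlinarith
      omega
    · intro S hS
      rcases Finset.mem_insert.mp hS with rfl | hS
      · exact ⟨hD, by simp⟩
      · exact ⟨(h𝔽 S hS).1, (h𝔽 S hS).2.2⟩
  · rcases Nat.lt_or_ge 𝒜.card k with hlt | hge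
    · -- 1 ≤ t < k : transversal T, extend to base of size k-1
      obtain ⟨T, hTcard, hTmeet, -⟩ := exists_transversal 𝒜
        (fun A hA => (hcard A hA).ge) ht
      obtain ⟨B, hTB, hB⟩ := Finset.exists_superset_card_eq (s := T)
        (by omega : T.card ≤ k - 1) (by omega)
      obtain ⟨𝔽, h𝔽card, h𝔽⟩ := family_from_base (by omega) hkn 𝒜 B hB
        (fun A hA => ((hTmeet A hA).mono (Finset.inter_subset_inter_right hTB)))
      refine ⟨𝔽, ?_, fun S hS => ⟨(h𝔽 S hS).1, (h𝔽 S hS).2.2⟩⟩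
      have h1 : k * k ≤ n - k := by omega
      have h2 : 2 * k ≤ k * k := by nlinarith
      omega
    · -- t = k
      have htk : 𝒜.card = k := le_antisymm ht hge
      by_cases hdisj : ∀ A ∈ 𝒜, ∀ B ∈ 𝒜, A ≠ B → Disjoint A B
      · -- pairwise disjoint case
        obtain ⟨A, hA, B, hB, hAB⟩ := Finset.one_lt_card.mp (by omega : 1 < 𝒜.card)
        have hABd : Disjoint A B := hdisj A hA B hB hAB
        set ℛ := (𝒜.erase A).erase B with hℛ
        have hℛcard : ℛ.card = k - 2 := by
          rw [hℛ, Finset.card_erase_of_mem (Finset.mem_erase.mpr ⟨Ne.symm hAB, hB⟩),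
            Finset.card_erase_of_mem hA, htk]
          omega
        have hℛsub : ℛ ⊆ 𝒜 := (Finset.erase_subset _ _).trans (Finset.erase_subset _ _)
        obtain ⟨T, hTcard, hTmeet, hTmem⟩ := exists_transversal ℛ
          (fun C hC => (hcard C (hℛsub hC)).ge) (by omega)
        -- T is disjoint from A and from B
        have hTA : ∀ x ∈ T, x ∉ A := by
          intro x hxT hxA
          obtain ⟨C, hC, hxC⟩ := hTmem x hxT
          have hCA : C ≠ A := (Finset.mem_erase.mp (Finset.mem_erase.mp hC).2).1
          exact Finset.disjoint_left.mp (hdisj C (hℛsub hC) A hA hCA) hxC hxA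
        have hTB : ∀ x ∈ T, x ∉ B := by
          intro x hxT hxB
          obtain ⟨C, hC, hxC⟩ := hTmem x hxT
          have hCB : C ≠ B := (Finset.mem_erase.mp hC).1
          exact Finset.disjoint_left.mp (hdisj C (hℛsub hC) B hB hCB) hxC hxB
        refine ⟨(A ×ˢ B).image (fun p => insert p.1 (insert p.2 T)), ?_, ?_⟩
        · have hinj : Set.InjOn (fun p : Fin n × Fin n => insert p.1 (insert p.2 T))
              (A ×ˢ B : Finset (Fin n × Fin n)) := by
            intro p hp q hq hpq
            simp only [Finset.coe_product, Set.mem_prod, Finset.mem_coe] at hp hq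
            have hpq' : insert p.1 (insert p.2 T) = insert q.1 (insert q.2 T) := hpq
            have h1 : p.1 = q.1 := by
              have : p.1 ∈ insert q.1 (insert q.2 T) :=
                hpq' ▸ Finset.mem_insert_self _ _
              rcases Finset.mem_insert.mp this with h | h
              · exact h
              · rcases Finset.mem_insert.mp h with h | h
                · exact absurd (h ▸ hp.1) (Finset.disjoint_left.mp hABd · hq.2)
                · exact absurd hp.1 (fun hh => hTA _ h hh)
            have h2 : p.2 = q.2 := by
              have : p.2 ∈ insert q.1 (insert q.2 T) := by
                rw [← hpq']
                exact Finset.mem_insert_of_mem (Finset.mem_insert_self _ _)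
              rcases Finset.mem_insert.mp this with h | h
              · exact absurd (h ▸ hp.2) (fun hh => Finset.disjoint_left.mp hABd hq.1 hh)
              · rcases Finset.mem_insert.mp h with h | h
                · exact h
                · exact absurd hp.2 (fun hh => hTB _ h hh)
            exact Prod.ext h1 h2
          rw [Finset.card_image_of_injOn hinj, Finset.card_product,
            hcard A hA, hcard B hB, htk]
          have h2 : 2 * k ≤ k * k := by nlinarith
          omega
        · intro S hS
          obtain ⟨p, hp, rfl⟩ := Finset.mem_image.mp hS
          rw [Finset.mem_product] at hp
          have hp2T : p.2 ∉ T := fun h => hTB _ h hp.2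
          have hp1 : p.1 ∉ insert p.2 T := by
            rw [Finset.mem_insert]
            rintro (h | h)
            · exact Finset.disjoint_left.mp hABd hp.1 (h ▸ hp.2)
            · exact hTA _ h hp.1
          constructor
          · rw [Finset.card_insert_of_notMem hp1, Finset.card_insert_of_notMem hp2T,
              hTcard, hℛcard]
            omega
          · intro C hC
            rw [Finset.not_disjoint_iff]
            by_cases hCA : C = A
            · exact ⟨p.1, Finset.mem_insert_self _ _, hCA ▸ hp.1⟩
            · by_cases hCB : C = B
              · exact ⟨p.2, Finset.mem_insert_of_mem (Finset.mem_insert_self _ _),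
                  hCB ▸ hp.2⟩
              · have hCR : C ∈ ℛ :=
                  Finset.mem_erase.mpr ⟨hCB, Finset.mem_erase.mpr ⟨hCA, hC⟩⟩
                obtain ⟨y, hy⟩ := hTmeet C hCR
                rw [Finset.mem_inter] at hy
                exact ⟨y, Finset.mem_insert_of_mem (Finset.mem_insert_of_mem hy.1), hy.2⟩
      · -- some two sets meet
        push_neg at hdisj
        obtain ⟨A, hA, B, hB, hAB, hABmeet⟩ := hdisj
        obtain ⟨x, hx⟩ := Finset.not_disjoint_iff.mp hABmeet
        set ℛ := (𝒜.erase A).erase B with hℛ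
        have hℛcard : ℛ.card = k - 2 := by
          rw [hℛ, Finset.card_erase_of_mem (Finset.mem_erase.mpr ⟨Ne.symm hAB, hB⟩),
            Finset.card_erase_of_mem hA, htk]
          omega
        have hℛsub : ℛ ⊆ 𝒜 := (Finset.erase_subset _ _).trans (Finset.erase_subset _ _)
        obtain ⟨T, hTcard, hTmeet, -⟩ := exists_transversal ℛ
          (fun C hC => (hcard C (hℛsub hC)).ge) (by omega)
        have hxTcard : (insert x T).card ≤ k - 1 := by
          have := Finset.card_insert_le x T
          omega
        obtain ⟨Bb, hTB, hBb⟩ := Finset.exists_superset_card_eq (s := insert x T)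
          hxTcard (by omega)
        have hmeetall : ∀ C ∈ 𝒜, (Bb ∩ C).Nonempty := by
          intro C hC
          by_cases hCA : C = A
          · exact ⟨x, Finset.mem_inter.mpr ⟨hTB (Finset.mem_insert_self x T), hCA ▸ hx.1⟩⟩
          · by_cases hCB : C = B
            · exact ⟨x, Finset.mem_inter.mpr ⟨hTB (Finset.mem_insert_self x T), hCB ▸ hx.2⟩⟩
            · have hCR : C ∈ ℛ := Finset.mem_erase.mpr ⟨hCB, Finset.mem_erase.mpr ⟨hCA, hC⟩⟩
              exact (hTmeet C hCR).mono (Finset.inter_subset_inter_right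
                (fun y hy => hTB (Finset.mem_insert_of_mem hy)))
        obtain ⟨𝔽, h𝔽card, h𝔽⟩ := family_from_base (by omega) hkn 𝒜 Bb hBb hmeetall
        refine ⟨𝔽, ?_, fun S hS => ⟨(h𝔽 S hS).1, (h𝔽 S hS).2.2⟩⟩
        have h1 : k * k ≤ n - k := by omega
        have h2 : 2 * k ≤ k * k := by nlinarith
        omega

open Finset in
lemma exists_blocks {n k : ℕ} (hk : 0 < k) (hn : k * (k + 1) ≤ n) :
    ∃ B : ℕ → Finset (Fin n), (∀ i, i ≤ k → (B i).card = k) ∧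
      (∀ i j, i ≠ j → Disjoint (B i) (B j)) := by
  refine ⟨fun i => (Finset.Ico (i * k) (min (i * k + k) n)).attachFin
    (fun m hm => lt_of_lt_of_le (Finset.mem_Ico.mp hm).2 (min_le_right _ _)), ?_, ?_⟩
  · intro i hi
    rw [Finset.card_attachFin, Nat.card_Ico]
    have h1 : i * k ≤ k * k := Nat.mul_le_mul_right k hi
    have h2 : k * k + k = k * (k + 1) := by ring
    omega
  · intro i j hij
    rw [Finset.disjoint_left]
    intro a hai haj
    rw [Finset.mem_attachFin, Finset.mem_Ico] at hai haj
    rcases Nat.lt_or_ge i j with h | h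
    · have h1 : (i + 1) * k ≤ j * k := Nat.mul_le_mul_right k h
      have h2 : i * k + k = (i + 1) * k := by ring
      omega
    · have hji : j < i := lt_of_le_of_ne h (Ne.symm hij)
      have h1 : (j + 1) * k ≤ i * k := Nat.mul_le_mul_right k hji
      have h2 : j * k + k = (j + 1) * k := by ring
      omega

open Finset in
theorem kneser_totalRomanDomNum (n k : ℕ) (hk : 1 < k) (hn : k * (k + 1) ≤ n) :
    totalRomanDomNum (kneserGraph n k) = 2 * (k + 1) := by
  classical
  have hk0 : 0 < k := by omega
  have hn0 : 0 < n := by nlinarith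
  -- the blocks
  obtain ⟨B, hBcard, hBdisj⟩ := exists_blocks hk0 hn
  set 𝔅 : Finset (Finset (Fin n)) := (Finset.range (k + 1)).image B with h𝔅
  have hBinj : Set.InjOn B (Finset.range (k + 1) : Finset ℕ) := by
    intro i hi j hj hij
    by_contra hne
    have hd := hBdisj i j hne
    rw [hij, disjoint_self] at hd
    have : (B j).card = k := hBcard j (by simpa using Nat.lt_succ_iff.mp (by simpa using hj))
    rw [Finset.bot_eq_empty] at hd
    rw [hd] at this
    simp at this
    omega
  have h𝔅card : 𝔅.card = k + 1 := by
    rw [h𝔅, Finset.card_image_of_injOn hBinj, Finset.card_range]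
  have h𝔅k : ∀ A ∈ 𝔅, A.card = k := by
    intro A hA
    obtain ⟨i, hi, rfl⟩ := Finset.mem_image.mp hA
    exact hBcard i (Nat.lt_succ_iff.mp (Finset.mem_range.mp hi))
  -- the TRDF
  set f : {s : Finset (Fin n) // s.card = k} → ℕ := fun v => if v.1 ∈ 𝔅 then 2 else 0
    with hf
  -- every vertex has a neighbor among the blocks (with f-value 2)
  have key : ∀ v : {s : Finset (Fin n) // s.card = k},
      ∃ u, (kneserGraph n k).Adj v u ∧ f u = 2 := by
    intro v
    have hdis : ∃ i ∈ Finset.range (k + 1), Disjoint v.1 (B i) := by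
      by_contra hcon
      push_neg at hcon
      have hch : ∀ i, ∃ a, a ∈ v.1 ∧ a ∈ B i ∨ True := fun i => ⟨⟨0, hn0⟩, Or.inr trivial⟩
      have hsel : ∀ i ∈ Finset.range (k + 1), ∃ a, a ∈ v.1 ∧ a ∈ B i := by
        intro i hi
        obtain ⟨a, ha1, ha2⟩ := Finset.not_disjoint_iff.mp (hcon i hi)
        exact ⟨a, ha1, ha2⟩
      set g : ℕ → Fin n := fun i =>
        if h : ∃ a, a ∈ v.1 ∧ a ∈ B i then h.choose else ⟨0, hn0⟩ with hg
      have hcard := Finset.card_le_card_of_injOn g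
        (fun i hi => by
          have h := hsel i hi
          simp only [hg, dif_pos h]
          exact h.choose_spec.1)
        (by
          intro i hi j hj hgij
          by_contra hne
          have hsi := hsel i hi
          have hsj := hsel j hj
          have hgi : g i ∈ B i := by simp only [hg, dif_pos hsi]; exact hsi.choose_spec.2
          have hgj : g j ∈ B j := by simp only [hg, dif_pos hsj]; exact hsj.choose_spec.2
          rw [hgij] at hgi
          exact Finset.disjoint_left.mp (hBdisj i j hne) (hgij ▸ hgi) hgj)
      rw [Finset.card_range, v.2] at hcard
      omega
    obtain ⟨i, hi, hdisj⟩ := hdis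
    have hBi : (B i).card = k := h𝔅k _ (Finset.mem_image_of_mem B hi)
    refine ⟨⟨B i, hBi⟩, ⟨?_, hdisj⟩, ?_⟩
    · intro hveq
      have hv1 : v.1 = B i := congrArg Subtype.val hveq
      rw [hv1, disjoint_self, Finset.bot_eq_empty] at hdisj
      rw [hdisj] at hBi
      simp at hBi
      omega
    · simp only [hf, if_pos (show B i ∈ 𝔅 from Finset.mem_image_of_mem B hi)]
  have hTRDF : IsTRDF (kneserGraph n k) f := by
    refine ⟨⟨fun v => ?_, fun v _ => key v⟩, fun v => ?_⟩
    · simp only [hf]; split <;> omega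
    · obtain ⟨u, hadj, hu2⟩ := key v
      calc 1 ≤ f u := by omega
        _ ≤ ∑ u ∈ Finset.univ.filter (fun u => (kneserGraph n k).Adj v u), f u :=
          Finset.single_le_sum (fun _ _ => Nat.zero_le _)
            (Finset.mem_filter.mpr ⟨Finset.mem_univ u, hadj⟩)
  have hsum : ∑ v, f v = 2 * (k + 1) := by
    rw [hf]
    rw [← Finset.sum_filter, Finset.sum_const, smul_eq_mul]
    have : (Finset.univ.filter
        (fun v : {s : Finset (Fin n) // s.card = k} => v.1 ∈ 𝔅)).card = 𝔅.card := by
      apply Finset.card_bij (fun v _ => v.1)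
      · intro v hv; exact (Finset.mem_filter.mp hv).2
      · intro v hv w hw hvw; exact Subtype.ext hvw
      · intro A hA
        exact ⟨⟨A, h𝔅k A hA⟩, Finset.mem_filter.mpr ⟨Finset.mem_univ _, hA⟩, rfl⟩
    rw [this, h𝔅card]
    ring
  have hmem : 2 * (k + 1) ∈ {w | ∃ f, IsTRDF (kneserGraph n k) f ∧ ∑ v, f v = w} :=
    ⟨f, hTRDF, hsum⟩
  apply le_antisymm
  · exact Nat.sInf_le hmem
  · apply le_csInf ⟨2 * (k + 1), hmem⟩
    rintro w ⟨g, hg, rfl⟩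
    -- lower bound
    by_contra hw
    push_neg at hw
    have hw' : ∑ v, g v ≤ 2 * k + 1 := by omega
    set V1 := Finset.univ.filter (fun v => g v = 1) with hV1
    set V2 := Finset.univ.filter (fun v => g v = 2) with hV2
    have hdisj12 : Disjoint V1 V2 := by
      rw [Finset.disjoint_left]
      intro v h1 h2
      have := (Finset.mem_filter.mp h1).2
      have := (Finset.mem_filter.mp h2).2
      omega
    have hsumlow : V1.card + 2 * V2.card ≤ ∑ v, g v := by
      calc V1.card + 2 * V2.card = ∑ v ∈ V1, g v + ∑ v ∈ V2, g v := by
            rw [Finset.sum_congr rfl (fun v hv => (Finset.mem_filter.mp hv).2),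
              Finset.sum_congr rfl (fun v hv => (Finset.mem_filter.mp hv).2),
              Finset.sum_const, Finset.sum_const, smul_eq_mul, smul_eq_mul]
            ring
        _ = ∑ v ∈ V1 ∪ V2, g v := (Finset.sum_union hdisj12).symm
        _ ≤ ∑ v, g v := Finset.sum_le_sum_of_subset (Finset.subset_univ _)
    have ht : V2.card ≤ k := by omega
    set 𝒜 := V2.image Subtype.val with h𝒜
    have h𝒜card : 𝒜.card = V2.card :=
      Finset.card_image_of_injective _ Subtype.val_injective
    obtain ⟨𝔽, h𝔽card, h𝔽⟩ := count_meets hk hn 𝒜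
      (fun A hA => by obtain ⟨v, -, rfl⟩ := Finset.mem_image.mp hA; exact v.2)
      (h𝒜card ▸ ht)
    set F := Finset.univ.filter
      (fun v : {s : Finset (Fin n) // s.card = k} => ∀ A ∈ 𝒜, ¬ Disjoint v.1 A) with hF
    have h𝔽sub : 𝔽 ⊆ F.image Subtype.val := by
      intro S hS
      exact Finset.mem_image.mpr ⟨⟨S, (h𝔽 S hS).1⟩,
        Finset.mem_filter.mpr ⟨Finset.mem_univ _, fun A hA => (h𝔽 S hS).2 A hA⟩, rfl⟩
    have hFcard : 2 * k + 2 - V2.card ≤ F.card := by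
      calc 2 * k + 2 - V2.card = 2 * k + 2 - 𝒜.card := by rw [h𝒜card]
        _ ≤ 𝔽.card := h𝔽card
        _ ≤ (F.image Subtype.val).card := Finset.card_le_card h𝔽sub
        _ ≤ F.card := Finset.card_image_le
    have hFsub : F ⊆ V1 ∪ V2 := by
      intro v hv
      have hv' := (Finset.mem_filter.mp hv).2
      have hle := hg.1.1 v
      rcases Nat.lt_or_ge (g v) 1 with h0 | h1
      · obtain ⟨u, hadj, hu2⟩ := hg.1.2 v (by omega)
        have hu : u ∈ V2 := Finset.mem_filter.mpr ⟨Finset.mem_univ _, hu2⟩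
        exact absurd hadj.2 (hv' u.1 (Finset.mem_image_of_mem _ hu))
      · rcases Nat.lt_or_ge (g v) 2 with h2 | h2
        · exact Finset.mem_union_left _ (Finset.mem_filter.mpr ⟨Finset.mem_univ _, by omega⟩)
        · exact Finset.mem_union_right _ (Finset.mem_filter.mpr ⟨Finset.mem_univ _, by omega⟩)
    have : F.card ≤ V1.card + V2.card :=
      le_trans (Finset.card_le_card hFsub) (Finset.card_union_le _ _)
    omega
end

section
/- For all integers n and k with k > 1 and n ≥ k(k+1), the Roman domination number of the Kneser graph K_{n,k} equals 2(k+1), i.e. γ_R(K_{n,k}) = 2(k+1). -/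
section Helpers
variable {n k : ℕ}

lemma rdf_one_of_meets (f : {s : Finset (Fin n) // s.card = k} → ℕ)
    (hf : IsRDF (kneserGraph n k) f) (v : {s : Finset (Fin n) // s.card = k})
    (h : ∀ u, f u = 2 → ¬ Disjoint v.1 u.1) : 1 ≤ f v := by
  by_contra h1
  push_neg at h1
  obtain ⟨u, hadj, hu2⟩ := hf.2 v (by omega)
  exact h u hu2 hadj.2

open Classical in
lemma rdf_count (f : {s : Finset (Fin n) // s.card = k} → ℕ) (hf2 : ∀ v, f v ≤ 2) :
    (Finset.univ.filter fun v => 1 ≤ f v).card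
      + (Finset.univ.filter fun v => f v = 2).card ≤ ∑ v, f v := by
  rw [Finset.card_filter, Finset.card_filter, ← Finset.sum_add_distrib]
  apply Finset.sum_le_sum
  intro v _
  have := hf2 v
  split_ifs <;> omega

end Helpers

section Helpers2
variable {n k : ℕ}

open Classical in
lemma transversal_count (hk : 1 < k) (hn : k * (k + 1) ≤ n)
    (f : {s : Finset (Fin n) // s.card = k} → ℕ) (hf : IsRDF (kneserGraph n k) f)
    (T : Finset (Fin n)) (hT : T.card ≤ k - 1)
    (hhit : ∀ u, f u = 2 → ∃ x ∈ T, x ∈ u.1) :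
    n - k + 1 ≤ (Finset.univ.filter fun v => 1 ≤ f v).card := by
  have hkk : k * k + k ≤ n := by rw [Nat.mul_succ] at hn; exact hn
  have hkn : k ≤ n := by nlinarith
  obtain ⟨E, hTE, hE⟩ := Finset.exists_superset_card_eq (n := k - 1) hT
    (by rw [Fintype.card_fin]; omega)
  have hcard : ∀ x : Fin n, x ∉ E → (insert x E).card = k := by
    intro x hx
    rw [Finset.card_insert_of_notMem hx, hE]; omega
  have hmaps : ∀ x : {y // y ∈ Finset.univ \ E},
      (⟨insert x.1 E, hcard x.1 ((Finset.mem_sdiff.mp x.2).2)⟩ :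
        {s : Finset (Fin n) // s.card = k}) ∈ Finset.univ.filter fun v => 1 ≤ f v := by
    intro x
    simp only [Finset.mem_filter, Finset.mem_univ, true_and]
    apply rdf_one_of_meets f hf
    intro u hu2 hdis
    obtain ⟨z, hzT, hzu⟩ := hhit u hu2
    exact Finset.disjoint_left.mp hdis (Finset.mem_insert_of_mem (hTE hzT)) hzu
  have hinj := Finset.card_le_card_of_injOn
    (f := fun x : {y // y ∈ Finset.univ \ E} =>
      (⟨insert x.1 E, hcard x.1 ((Finset.mem_sdiff.mp x.2).2)⟩ :
        {s : Finset (Fin n) // s.card = k}))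
    (s := (Finset.univ \ E).attach) (fun x _ => hmaps x) ?_
  · have h1 : ((Finset.univ \ E).attach).card = n - (k-1) := by
      rw [Finset.card_attach, Finset.card_sdiff_of_subset (Finset.subset_univ E), hE,
        Finset.card_univ, Fintype.card_fin]
    omega
  · intro x _ y _ hxy
    simp only [Subtype.mk.injEq] at hxy
    have hx : x.1 ∉ E := (Finset.mem_sdiff.mp x.2).2
    have hy : y.1 ∉ E := (Finset.mem_sdiff.mp y.2).2
    have : x.1 ∈ insert y.1 E := by rw [← hxy]; exact Finset.mem_insert_self _ _
    rcases Finset.mem_insert.mp this with h | h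
    · exact Subtype.ext h
    · exact absurd h hx

end Helpers2

section Helpers3
variable {n k : ℕ}

lemma card_V_ge (hk : 1 < k) (hn : k * (k + 1) ≤ n) :
    n - k + 2 ≤ Fintype.card {s : Finset (Fin n) // s.card = k} := by
  classical
  have hkk : k * k + k ≤ n := by rw [Nat.mul_succ] at hn; exact hn
  have hkn : 2 * k ≤ n := by nlinarith
  obtain ⟨E, -, hE⟩ := Finset.exists_superset_card_eq (n := k - 1)
    (s := (∅ : Finset (Fin n))) (by simp) (by rw [Fintype.card_fin]; omega)
  have hsd : (Finset.univ \ E).card = n - (k - 1) := by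
    rw [Finset.card_sdiff_of_subset (Finset.subset_univ E), hE, Finset.card_univ, Fintype.card_fin]
  obtain ⟨E', hE'sub, hE'⟩ := Finset.exists_subset_card_eq (show k ≤ (Finset.univ \ E).card by omega)
  have hcard : ∀ x : Fin n, x ∉ E → (insert x E).card = k := by
    intro x hx
    rw [Finset.card_insert_of_notMem hx, hE]; omega
  set S : Finset {s : Finset (Fin n) // s.card = k} :=
    (Finset.univ \ E).attach.image
      (fun x => ⟨insert x.1 E, hcard x.1 ((Finset.mem_sdiff.mp x.2).2)⟩) with hS
  have hScard : S.card = n - (k - 1) := by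
    rw [hS, Finset.card_image_of_injOn, Finset.card_attach, hsd]
    intro x _ y _ hxy
    simp only [Subtype.mk.injEq] at hxy
    have hx : x.1 ∉ E := (Finset.mem_sdiff.mp x.2).2
    have : x.1 ∈ insert y.1 E := by rw [← hxy]; exact Finset.mem_insert_self _ _
    rcases Finset.mem_insert.mp this with h | h
    · exact Subtype.ext h
    · exact absurd h hx
  have hvstar : (⟨E', hE'⟩ : {s : Finset (Fin n) // s.card = k}) ∉ S := by
    rw [hS]
    simp only [Finset.mem_image, Subtype.mk.injEq, not_exists]
    rintro x ⟨-, hcontra⟩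
    have hEne : E.Nonempty := Finset.card_pos.mp (by rw [hE]; omega)
    obtain ⟨e, he⟩ := hEne
    have : e ∈ E' := by rw [← hcontra]; exact Finset.mem_insert_of_mem he
    exact (Finset.mem_sdiff.mp (hE'sub this)).2 he
  have := Finset.card_le_univ (insert (⟨E', hE'⟩ : {s : Finset (Fin n) // s.card = k}) S)
  rw [Finset.card_insert_of_notMem hvstar, hScard] at this
  omega

end Helpers3

open Classical in
lemma kneser_rdf_lower {n k : ℕ} (hk : 1 < k) (hn : k * (k + 1) ≤ n)
    (f : {s : Finset (Fin n) // s.card = k} → ℕ) (hf : IsRDF (kneserGraph n k) f) :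
    2 * (k + 1) ≤ ∑ v, f v := by
  by_contra hw
  push_neg at hw
  have hkk : k * k + k ≤ n := by rw [Nat.mul_succ] at hn; exact hn
  have hk2 : 2 * k ≤ k * k := by nlinarith
  have hcount := rdf_count f hf.1
  set V2 := Finset.univ.filter (fun v : {s : Finset (Fin n) // s.card = k} => f v = 2)
    with hV2
  have hmemV2 : ∀ u, f u = 2 → u ∈ V2 := fun u hu => by
    rw [hV2]; simp [hu]
  have hne : ∀ A : {s : Finset (Fin n) // s.card = k}, A.1.Nonempty :=
    fun A => Finset.card_pos.mp (by rw [A.2]; omega)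
  have finish : ∀ T : Finset (Fin n), T.card ≤ k - 1 →
      (∀ u, f u = 2 → ∃ x ∈ T, x ∈ u.1) → 1 ≤ V2.card → False := by
    intro T hTc hhit ht1
    have := transversal_count hk hn f hf T hTc hhit
    omega
  rcases Nat.eq_zero_or_pos V2.card with ht0 | ht1
  · -- no vertex has value 2 : every vertex has f ≥ 1
    have hV2e : V2 = ∅ := Finset.card_eq_zero.mp ht0
    have hall : ∀ v, 1 ≤ f v := by
      intro v
      apply rdf_one_of_meets f hf
      intro u hu2
      exact absurd (hV2e ▸ hmemV2 u hu2) (Finset.notMem_empty u)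
    have hfull : (Finset.univ.filter fun v : {s : Finset (Fin n) // s.card = k} => 1 ≤ f v)
        = Finset.univ := by
      apply Finset.filter_true_of_mem
      intro v _; exact hall v
    rw [hfull, Finset.card_univ] at hcount
    have := card_V_ge hk hn
    omega
  · by_cases htk : V2.card ≤ k - 1
    · -- few 2's : small transversal by choosing min of each
      apply finish (V2.attach.image (fun A => A.1.1.min' (hne A.1)))
      · exact le_trans (Finset.card_image_le) (by rw [Finset.card_attach]; exact htk)
      · intro u hu2
        exact ⟨u.1.min' (hne u), Finset.mem_image.mpr ⟨⟨u, hmemV2 u hu2⟩,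
          Finset.mem_attach _ _, rfl⟩, Finset.min'_mem _ _⟩
      · exact ht1
    · have hV2f : V2.card ≤ (Finset.univ.filter
          fun v : {s : Finset (Fin n) // s.card = k} => 1 ≤ f v).card := by
        apply Finset.card_le_card
        intro v hv
        rw [hV2] at hv
        simp only [Finset.mem_filter, Finset.mem_univ, true_and] at hv ⊢
        omega
      have ht2 : V2.card = k := by omega
      by_cases hdisj : ∀ A ∈ V2, ∀ B ∈ V2, A ≠ B → Disjoint A.1 B.1
      · -- all pairwise disjoint, V2.card = k : k² sets meeting all
        obtain ⟨A₁, hA₁, A₂, hA₂, hA12⟩ := Finset.one_lt_card.mp (by omega : 1 < V2.card)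
        have hA21 : A₂ ≠ A₁ := hA12.symm
        set W := (V2.erase A₁).erase A₂ with hW
        have hWmem : ∀ C ∈ W, C ∈ V2 ∧ C ≠ A₁ ∧ C ≠ A₂ := by
          intro C hC
          rw [hW, Finset.mem_erase] at hC
          obtain ⟨h2, hC⟩ := hC
          rw [Finset.mem_erase] at hC
          exact ⟨hC.2, hC.1, h2⟩
        set B₀ := W.attach.image (fun C => C.1.1.min' (hne C.1)) with hB₀
        have hB₀prop : ∀ b ∈ B₀, ∃ C ∈ V2, C ≠ A₁ ∧ C ≠ A₂ ∧ b ∈ C.1 := by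
          intro b hb
          rw [hB₀] at hb
          obtain ⟨C, -, rfl⟩ := Finset.mem_image.mp hb
          obtain ⟨h0, h1, h2⟩ := hWmem C.1 C.2
          exact ⟨C.1, h0, h1, h2, Finset.min'_mem _ _⟩
        have hB₀A1 : ∀ b ∈ B₀, b ∉ A₁.1 := by
          intro b hb hbA
          obtain ⟨C, hC, hC1, -, hbC⟩ := hB₀prop b hb
          exact Finset.disjoint_left.mp (hdisj C hC A₁ hA₁ hC1) hbC hbA
        have hB₀A2 : ∀ b ∈ B₀, b ∉ A₂.1 := by
          intro b hb hbA
          obtain ⟨C, hC, -, hC2, hbC⟩ := hB₀prop b hb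
          exact Finset.disjoint_left.mp (hdisj C hC A₂ hA₂ hC2) hbC hbA
        have hWcard : W.card = k - 2 := by
          rw [hW, Finset.card_erase_of_mem (Finset.mem_erase.mpr ⟨hA21, hA₂⟩),
            Finset.card_erase_of_mem hA₁, ht2]
          omega
        have hB₀card : B₀.card = k - 2 := by
          rw [hB₀, Finset.card_image_of_injOn, Finset.card_attach, hWcard]
          intro C _ C' _ hCC
          by_contra hner
          have hne2 : C.1 ≠ C'.1 := fun h => hner (Subtype.ext h)
          have hd := hdisj C.1 (hWmem C.1 C.2).1 C'.1 (hWmem C'.1 C'.2).1 hne2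
          have hCC' : C.1.1.min' (hne C.1) = C'.1.1.min' (hne C'.1) := hCC
          have hmm := Finset.min'_mem C'.1.1 (hne C'.1)
          rw [← hCC'] at hmm
          exact Finset.disjoint_left.mp hd (Finset.min'_mem _ _) hmm
        have hdA : Disjoint A₁.1 A₂.1 := hdisj _ hA₁ _ hA₂ hA12
        have hcardS : ∀ x ∈ A₁.1, ∀ y ∈ A₂.1, (insert x (insert y B₀)).card = k := by
          intro x hx y hy
          have hyB : y ∉ B₀ := fun h => hB₀A2 y h hy
          have hxB : x ∉ B₀ := fun h => hB₀A1 x h hx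
          have hxy : x ≠ y := fun h => Finset.disjoint_left.mp hdA hx (h ▸ hy)
          rw [Finset.card_insert_of_notMem (by simp [Finset.mem_insert, hxy, hxB]),
            Finset.card_insert_of_notMem hyB, hB₀card]
          omega
        have hmeets : ∀ x ∈ A₁.1, ∀ y ∈ A₂.1, ∀ u, f u = 2 →
            ¬ Disjoint (insert x (insert y B₀)) u.1 := by
          intro x hx y hy u hu2 hdis
          have hu : u ∈ V2 := hmemV2 u hu2
          by_cases h1 : u = A₁
          · exact Finset.disjoint_left.mp hdis (Finset.mem_insert_self _ _) (h1 ▸ hx)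
          · by_cases h2 : u = A₂
            · exact Finset.disjoint_left.mp hdis
                (Finset.mem_insert_of_mem (Finset.mem_insert_self _ _)) (h2 ▸ hy)
            · have huW : u ∈ W := by
                rw [hW]
                exact Finset.mem_erase.mpr ⟨h2, Finset.mem_erase.mpr ⟨h1, hu⟩⟩
              have : u.1.min' (hne u) ∈ B₀ := by
                rw [hB₀]
                exact Finset.mem_image.mpr ⟨⟨u, huW⟩, Finset.mem_attach _ _, rfl⟩
              exact Finset.disjoint_left.mp hdis
                (Finset.mem_insert_of_mem (Finset.mem_insert_of_mem this))
                (Finset.min'_mem _ _)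
        have hinj := Finset.card_le_card_of_injOn
          (f := fun p : {q // q ∈ A₁.1 ×ˢ A₂.1} =>
            (⟨insert p.1.1 (insert p.1.2 B₀),
              hcardS p.1.1 (Finset.mem_product.mp p.2).1 p.1.2
                (Finset.mem_product.mp p.2).2⟩ : {s : Finset (Fin n) // s.card = k}))
          (s := (A₁.1 ×ˢ A₂.1).attach)
          (t := Finset.univ.filter fun v : {s : Finset (Fin n) // s.card = k} => 1 ≤ f v)
          ?_ ?_
        · rw [Finset.card_attach, Finset.card_product, A₁.2, A₂.2] at hinj
          omega
        · intro p _
          simp only [Finset.mem_coe, Finset.mem_filter, Finset.mem_univ, true_and]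
          exact rdf_one_of_meets f hf ⟨insert p.1.1 (insert p.1.2 B₀),
              hcardS p.1.1 (Finset.mem_product.mp p.2).1 p.1.2 (Finset.mem_product.mp p.2).2⟩
            (hmeets p.1.1 (Finset.mem_product.mp p.2).1 p.1.2 (Finset.mem_product.mp p.2).2)
        · intro p _ q _ hpq
          simp only [Subtype.mk.injEq] at hpq
          obtain ⟨hpx, hpy⟩ := Finset.mem_product.mp p.2
          obtain ⟨hqx, hqy⟩ := Finset.mem_product.mp q.2
          have hx : p.1.1 = q.1.1 := by
            have : p.1.1 ∈ insert q.1.1 (insert q.1.2 B₀) := by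
              rw [← hpq]; exact Finset.mem_insert_self _ _
            rcases Finset.mem_insert.mp this with h | h
            · exact h
            · rcases Finset.mem_insert.mp h with h' | h'
              · exact absurd (h' ▸ hpx) (fun hc => Finset.disjoint_left.mp hdA hc hqy)
              · exact absurd hpx (fun hc => hB₀A1 _ h' hc)
          have hy : p.1.2 = q.1.2 := by
            have : p.1.2 ∈ insert q.1.1 (insert q.1.2 B₀) := by
              rw [← hpq]
              exact Finset.mem_insert_of_mem (Finset.mem_insert_self _ _)
            rcases Finset.mem_insert.mp this with h | h
            · exact absurd (h ▸ hpy) (fun hc => Finset.disjoint_left.mp hdA hqx hc)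
            · rcases Finset.mem_insert.mp h with h' | h'
              · exact h'
              · exact absurd hpy (fun hc => hB₀A2 _ h' hc)
          exact Subtype.ext (Prod.ext hx hy)
      · -- two intersecting 2-sets : small transversal
        push_neg at hdisj
        obtain ⟨A, hA, B, hB, hAB, hnd⟩ := hdisj
        obtain ⟨z, hzA, hzB⟩ := Finset.not_disjoint_iff.mp hnd
        apply finish (insert z (((V2.erase A).erase B).attach.image
          (fun C => C.1.1.min' (hne C.1))))
        · have h1 : ((V2.erase A).erase B).card = k - 2 := by
            rw [Finset.card_erase_of_mem (Finset.mem_erase.mpr ⟨hAB.symm, hB⟩),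
              Finset.card_erase_of_mem hA, ht2]
            omega
          calc (insert z (((V2.erase A).erase B).attach.image
                (fun C => C.1.1.min' (hne C.1)))).card
              ≤ (((V2.erase A).erase B).attach.image
                (fun C => C.1.1.min' (hne C.1))).card + 1 := Finset.card_insert_le _ _
            _ ≤ ((V2.erase A).erase B).attach.card + 1 :=
                Nat.add_le_add_right Finset.card_image_le _
            _ ≤ k - 1 := by rw [Finset.card_attach, h1]; omega
        · intro u hu2
          have hu : u ∈ V2 := hmemV2 u hu2
          by_cases h1 : u = A
          · exact ⟨z, Finset.mem_insert_self _ _, h1 ▸ hzA⟩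
          · by_cases h2 : u = B
            · exact ⟨z, Finset.mem_insert_self _ _, h2 ▸ hzB⟩
            · refine ⟨u.1.min' (hne u), Finset.mem_insert_of_mem ?_, Finset.min'_mem _ _⟩
              exact Finset.mem_image.mpr ⟨⟨u, Finset.mem_erase.mpr ⟨h2,
                Finset.mem_erase.mpr ⟨h1, hu⟩⟩⟩, Finset.mem_attach _ _, rfl⟩
        · exact ht1


open Classical in
lemma kneser_rdf_upper {n k : ℕ} (hk : 1 < k) (hn : k * (k + 1) ≤ n) :
    ∃ f, IsRDF (kneserGraph n k) f ∧ ∑ v, f v = 2 * (k + 1) := by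
  have hkk : k * k + k ≤ n := by rw [Nat.mul_succ] at hn; exact hn
  have hbd : ∀ (i : ℕ) (j : Fin k), min i k * k + j.1 < n := by
    intro i j
    have h1 : min i k * k ≤ k * k := Nat.mul_le_mul_right k (min_le_right i k)
    have h2 : j.1 < k := j.2
    omega
  set A : ℕ → Finset (Fin n) :=
    fun i => Finset.univ.image (fun j : Fin k => (⟨min i k * k + j.1, hbd i j⟩ : Fin n))
    with hA
  have hAmem : ∀ i x, x ∈ A i ↔ ∃ j : Fin k, x.1 = min i k * k + j.1 := by
    intro i x
    rw [hA]
    simp only [Finset.mem_image, Finset.mem_univ, true_and]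
    constructor
    · rintro ⟨j, rfl⟩; exact ⟨j, rfl⟩
    · rintro ⟨j, hj⟩; exact ⟨j, by ext; exact hj.symm⟩
  have hAcard : ∀ i, (A i).card = k := by
    intro i
    rw [hA]
    rw [Finset.card_image_of_injective _ (fun j j' h => by
      have : min i k * k + j.1 = min i k * k + j'.1 := congrArg Fin.val h
      exact Fin.ext (by omega))]
    simp
  have hAdisj : ∀ i i', i ≤ k → i' ≤ k → i ≠ i' → Disjoint (A i) (A i') := by
    intro i i' hi hi' hne
    rw [Finset.disjoint_left]
    intro x hx hx'
    obtain ⟨j, hj⟩ := (hAmem i x).mp hx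
    obtain ⟨j', hj'⟩ := (hAmem i' x).mp hx'
    rw [min_eq_left hi] at hj
    rw [min_eq_left hi'] at hj'
    have hjk : j.1 < k := j.2
    have hjk' : j'.1 < k := j'.2
    have heq : i * k + j.1 = i' * k + j'.1 := by omega
    have : i = i' := by
      have h1 : (j.1 + i * k) / k = j.1 / k + i := Nat.add_mul_div_right j.1 i (by omega)
      have h2 : (j'.1 + i' * k) / k = j'.1 / k + i' := Nat.add_mul_div_right j'.1 i' (by omega)
      have h3 : j.1 / k = 0 := Nat.div_eq_of_lt hjk
      have h4 : j'.1 / k = 0 := Nat.div_eq_of_lt hjk'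
      have h5 : j.1 + i * k = j'.1 + i' * k := by omega
      rw [h5, h2] at h1
      omega
    exact hne this
  set g : ℕ → {s : Finset (Fin n) // s.card = k} := fun i => ⟨A i, hAcard i⟩ with hg
  set f : {s : Finset (Fin n) // s.card = k} → ℕ :=
    fun v => if ∃ i, i ≤ k ∧ v = g i then 2 else 0 with hf
  have hf2 : ∀ v, f v ≤ 2 := by
    intro v; rw [hf]; dsimp only; split_ifs <;> omega
  have hgval : ∀ i, i ≤ k → f (g i) = 2 := by
    intro i hi; rw [hf]; exact if_pos ⟨i, hi, rfl⟩
  refine ⟨f, ⟨hf2, ?_⟩, ?_⟩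
  · -- domination
    intro v hv0
    have hnP : ¬ ∃ i, i ≤ k ∧ v = g i := by
      intro h
      rw [hf] at hv0
      dsimp only at hv0
      rw [if_pos h] at hv0
      omega
    have hdis : ∃ i, i ≤ k ∧ Disjoint v.1 (A i) := by
      by_contra hcon
      push_neg at hcon
      have hint : ∀ i : {m // m ∈ Finset.range (k+1)}, (v.1 ∩ A i.1).Nonempty := by
        intro i
        have hi : i.1 ≤ k := by have := Finset.mem_range.mp i.2; omega
        exact Finset.not_disjoint_iff_nonempty_inter.mp (hcon i.1 hi)
      have hcard := Finset.card_le_card_of_injOn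
        (f := fun i : {m // m ∈ Finset.range (k+1)} => (v.1 ∩ A i.1).min' (hint i))
        (s := (Finset.range (k+1)).attach) (t := v.1) ?_ ?_
      · rw [Finset.card_attach, Finset.card_range, v.2] at hcard
        omega
      · intro i _
        exact Finset.mem_of_mem_inter_left (Finset.min'_mem _ _)
      · intro i _ i' _ hii
        have h1 := Finset.mem_of_mem_inter_right (Finset.min'_mem _ (hint i))
        have h2 := Finset.mem_of_mem_inter_right (Finset.min'_mem _ (hint i'))
        have hii' : (v.1 ∩ A i.1).min' (hint i) = (v.1 ∩ A i'.1).min' (hint i') := hii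
        rw [hii'] at h1
        by_contra hner
        have hne2 : i.1 ≠ i'.1 := fun h => hner (Subtype.ext h)
        have hi : i.1 ≤ k := by have := Finset.mem_range.mp i.2; omega
        have hi' : i'.1 ≤ k := by have := Finset.mem_range.mp i'.2; omega
        exact Finset.disjoint_left.mp (hAdisj i.1 i'.1 hi hi' hne2) h1 h2
    obtain ⟨i, hi, hdisj⟩ := hdis
    refine ⟨g i, ⟨?_, hdisj⟩, hgval i hi⟩
    intro h
    exact hnP ⟨i, hi, h⟩
  · -- sum
    have hstep : ∀ v, f v = 2 * (if ∃ i, i ≤ k ∧ v = g i then 1 else 0) := by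
      intro v; rw [hf]; dsimp only; split_ifs <;> ring
    calc ∑ v, f v = ∑ v, 2 * (if ∃ i, i ≤ k ∧ v = g i then 1 else 0) :=
          Finset.sum_congr rfl (fun v _ => hstep v)
      _ = 2 * ∑ v, (if ∃ i, i ≤ k ∧ v = g i then 1 else 0) := by rw [Finset.mul_sum]
      _ = 2 * (Finset.univ.filter (fun v => ∃ i, i ≤ k ∧ v = g i)).card := by
          rw [Finset.card_filter]
      _ = 2 * (k + 1) := by
          congr 1
          have himg : Finset.univ.filter (fun v => ∃ i, i ≤ k ∧ v = g i)
              = (Finset.range (k+1)).image g := by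
            ext v
            simp only [Finset.mem_filter, Finset.mem_univ, true_and, Finset.mem_image,
              Finset.mem_range, Nat.lt_succ_iff]
            constructor
            · rintro ⟨i, hi, rfl⟩; exact ⟨i, hi, rfl⟩
            · rintro ⟨i, hi, rfl⟩; exact ⟨i, hi, rfl⟩
          rw [himg, Finset.card_image_of_injOn, Finset.card_range]
          intro i hi i' hi' hgii
          by_contra hne
          have hAeq : A i = A i' := congrArg Subtype.val hgii
          have hi1 : i ≤ k := by have := Finset.mem_range.mp hi; omega
          have hi2 : i' ≤ k := by have := Finset.mem_range.mp hi'; omega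
          have hd := hAdisj i i' hi1 hi2 hne
          rw [hAeq] at hd
          have hemp : A i' = (⊥ : Finset (Fin n)) := disjoint_self.mp hd
          have hck := hAcard i'
          rw [hemp] at hck
          simp at hck
          omega


theorem kneser_romanDomNum (n k : ℕ) (hk : 1 < k) (hn : k * (k + 1) ≤ n) :
    romanDomNum (kneserGraph n k) = 2 * (k + 1) := by
  obtain ⟨f, hf, hsum⟩ := kneser_rdf_upper hk hn
  have hmem : 2 * (k + 1) ∈ {w | ∃ f, IsRDF (kneserGraph n k) f ∧ ∑ v, f v = w} :=
    ⟨f, hf, hsum⟩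
  unfold romanDomNum
  refine le_antisymm (Nat.sInf_le hmem) ?_
  obtain ⟨g, hg, hgs⟩ :=
    Nat.sInf_mem (⟨_, hmem⟩ :
      Set.Nonempty {w | ∃ f, IsRDF (kneserGraph n k) f ∧ ∑ v, f v = w})
  rw [← hgs]
  exact kneser_rdf_lower hk hn g hg
end

section
/- For every integer n ≥ 12, the signed Roman domination number of the Kneser graph K_{n,2} satisfies γ_sR(K_{n,2}) ≥ 2. -/
open Finset

lemma kneser2_adj_iff (n : ℕ) (v u : {s : Finset (Fin n) // s.card = 2}) :
    (kneserGraph n 2).Adj v u ↔ u.1 ∈ (v.1ᶜ).powersetCard 2 := by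
  rw [Finset.mem_powersetCard]
  constructor
  · rintro ⟨hne, hd⟩
    exact ⟨fun x hx => Finset.mem_compl.2 (fun hxv => Finset.disjoint_left.1 hd hxv hx), u.2⟩
  · rintro ⟨hsub, _⟩
    have hd : Disjoint v.1 u.1 := by
      rw [Finset.disjoint_left]
      intro x hxv hxu
      exact Finset.mem_compl.1 (hsub hxu) hxv
    refine ⟨fun h => ?_, hd⟩
    subst h
    have h0 : v.1 = ∅ := disjoint_self.mp hd
    have h2 := v.2
    rw [h0] at h2
    simp at h2

open Classical in
lemma kneser2_deg (n : ℕ) (v : {s : Finset (Fin n) // s.card = 2}) :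
    (Finset.univ.filter (fun u => (kneserGraph n 2).Adj v u)).card = (n-2).choose 2 := by
  classical
  have := Finset.card_bij (fun (u : {s : Finset (Fin n) // s.card = 2})
      (_ : u ∈ Finset.univ.filter (fun u => (kneserGraph n 2).Adj v u)) => u.1)
    (fun u hu => by
      simp only [mem_filter, mem_univ, true_and] at hu
      exact (kneser2_adj_iff n v u).1 hu)
    (fun a _ b _ h => Subtype.ext h)
    (fun s hs => by
      rw [Finset.mem_powersetCard] at hs
      exact ⟨⟨s, hs.2⟩, by
        simp only [mem_filter, mem_univ, true_and]
        exact (kneser2_adj_iff n v ⟨s, hs.2⟩).2 (Finset.mem_powersetCard.2 hs), rfl⟩)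
  rw [this, Finset.card_powersetCard, Finset.card_compl, v.2, Fintype.card_fin]

theorem kneser2_signedRomanDomNum_lower (n : ℕ) (hn : 12 ≤ n) :
    2 ≤ signedRomanDomNum (kneserGraph n 2) := by
  classical
  have hne : {w | ∃ f, IsSRDF (kneserGraph n 2) f ∧ ∑ v, f v = w}.Nonempty := by
    refine ⟨_, fun _ => 1, ⟨fun v => Or.inr (Or.inl rfl), fun v h => by simp at h,
      fun v => ?_⟩, rfl⟩
    show (1:ℤ) ≤ 1 + ∑ u ∈ Finset.univ.filter (fun u => (kneserGraph n 2).Adj v u), (1:ℤ)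
    have : (0:ℤ) ≤ ∑ u ∈ Finset.univ.filter (fun u => (kneserGraph n 2).Adj v u), (1:ℤ) :=
      Finset.sum_nonneg (fun _ _ => zero_le_one)
    linarith
  refine le_csInf hne ?_
  rintro w ⟨f, ⟨hrange, _, hclosed⟩, rfl⟩
  set G := kneserGraph n 2 with hG
  set d : ℕ := (n-2).choose 2 with hd
  set N : ℕ := Fintype.card {s : Finset (Fin n) // s.card = 2} with hNdef
  have hN : N = n.choose 2 := by
    rw [hNdef, Fintype.card_finset_len, Fintype.card_fin]
  -- sum the closed neighborhood condition
  have hsum : (N:ℤ) ≤ ∑ v, (f v + ∑ u ∈ Finset.univ.filter (fun u => G.Adj v u), f u) := by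
    calc (N:ℤ) = ∑ _v : {s : Finset (Fin n) // s.card = 2}, (1:ℤ) := by
          rw [Finset.sum_const, Finset.card_univ]; simp [hNdef]
      _ ≤ _ := Finset.sum_le_sum (fun v _ => hclosed v)
  have hswap : ∑ v, ∑ u ∈ Finset.univ.filter (fun u => G.Adj v u), f u
      = (d:ℤ) * ∑ u, f u := by
    calc ∑ v, ∑ u ∈ Finset.univ.filter (fun u => G.Adj v u), f u
        = ∑ v, ∑ u, if G.Adj v u then f u else 0 := by
          simp [Finset.sum_filter]
      _ = ∑ u, ∑ v, if G.Adj v u then f u else 0 := Finset.sum_comm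
      _ = ∑ u, (d:ℤ) * f u := by
          refine Finset.sum_congr rfl fun u _ => ?_
          rw [← Finset.sum_filter]
          have hfe : (Finset.univ.filter (fun v => G.Adj v u))
              = (Finset.univ.filter (fun v => G.Adj u v)) := by
            apply Finset.filter_congr
            intro v _
            simp [G.adj_comm]
          rw [hfe, Finset.sum_const, kneser2_deg]
          simp [hd, mul_comm]
      _ = (d:ℤ) * ∑ u, f u := by rw [Finset.mul_sum]
  rw [Finset.sum_add_distrib, hswap] at hsum
  -- so N ≤ (1+d) * w
  have key : (N:ℤ) ≤ (1 + d) * ∑ v, f v := by linarith [hsum]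
  -- N > 1 + d
  have hlt : 1 + d < N := by
    rw [hN, hd]
    obtain ⟨m, rfl⟩ : ∃ m, n = m + 2 := ⟨n - 2, by omega⟩
    have h1 : (m+2).choose 2 = (m+1) + (m + m.choose 2) := by
      simp [Nat.choose_succ_succ, Nat.choose_one_right]
      omega
    simp only [Nat.add_sub_cancel]
    omega
  by_contra hcon
  push_neg at hcon
  have hw1 : ∑ v, f v ≤ 1 := by omega
  have : (1 + (d:ℤ)) * ∑ v, f v ≤ (1 + d) * 1 := by
    apply mul_le_mul_of_nonneg_left hw1
    positivity
  rw [mul_one] at this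
  have : (N:ℤ) ≤ 1 + d := le_trans key this
  have := hlt
  omega
end

section
/- For every odd integer n with n ≥ 12 (equivalently, every odd n ≥ 13), the signed Roman domination number of the Kneser graph K_{n,2} satisfies γ_sR(K_{n,2}) ≤ 3. -/
open Finset

-- e2 identity
lemma two_mul_esymm2 {α : Type*} [DecidableEq α] (g : α → ℤ) (hg : ∀ x, g x ^ 2 = 1)
    (R : Finset α) :
    2 * ∑ s ∈ R.powersetCard 2, ∏ x ∈ s, g x = (∑ x ∈ R, g x) ^ 2 - R.card := by
  induction R using Finset.induction_on with
  | empty =>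
    rw [Finset.powersetCard_eq_empty.2 (by simp)]
    simp
  | @insert a R ha ih =>
    have hins := Finset.powersetCard_succ_insert ha 1
    norm_num at hins
    rw [hins]
    have hdisj : Disjoint (R.powersetCard 2) ((R.powersetCard 1).image (insert a)) := by
      rw [Finset.disjoint_left]
      intro s hs hs'
      obtain ⟨t, ht, rfl⟩ := Finset.mem_image.1 hs'
      have := Finset.mem_powersetCard.1 hs
      exact ha (this.1 (Finset.mem_insert_self a t))
    rw [Finset.sum_union hdisj]
    have himg : ∑ s ∈ (R.powersetCard 1).image (insert a), ∏ x ∈ s, g x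
        = g a * ∑ x ∈ R, g x := by
      rw [Finset.sum_image]
      · rw [Finset.powersetCard_one, Finset.sum_map, Finset.mul_sum]
        apply Finset.sum_congr rfl
        intro x hx
        have hax : a ∉ ({x} : Finset α) := by
          simp only [Finset.mem_singleton]
          rintro rfl; exact ha hx
        simp only [Function.Embedding.coeFn_mk]
        rw [Finset.prod_insert hax, Finset.prod_singleton]
      · intro s hs t ht hst
        have hsR := (Finset.mem_powersetCard.1 hs).1
        have htR := (Finset.mem_powersetCard.1 ht).1
        have has : a ∉ s := fun h => ha (hsR h)
        have hat : a ∉ t := fun h => ha (htR h)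
        have := congrArg (Finset.erase · a) hst
        simpa [Finset.erase_insert, has, hat] using this
    rw [himg, Finset.sum_insert ha, Finset.card_insert_of_notMem ha]
    push_cast
    have := hg a
    linear_combination ih - this

section KneserAux

variable {n : ℕ}

def eps (p : ℕ) (x : Fin n) : ℤ := if x.val < p then 1 else -1

lemma eps_sq (p : ℕ) (x : Fin n) : eps p x ^ 2 = 1 := by
  unfold eps; split <;> norm_num

def nxt (p : ℕ) (x : Fin n) : Fin n :=
  ⟨if x.val + 1 < n then x.val + 1 else p % n, by
    have hx := x.isLt
    split
    · omega
    · exact Nat.mod_lt _ (by omega)⟩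

lemma nxt_val (p : ℕ) (hp : p < n) (x : Fin n) :
    (nxt p x).val = if x.val + 1 < n then x.val + 1 else p := by
  simp only [nxt]
  rw [Nat.mod_eq_of_lt hp]

def prv (p : ℕ) (b : Fin n) : Fin n :=
  ⟨if p + 1 ≤ b.val then b.val - 1 else (n - 1) % n, by
    have hb := b.isLt
    split
    · omega
    · exact Nat.mod_lt _ (by omega)⟩

lemma prv_val (p : ℕ) (hn : 0 < n) (b : Fin n) :
    (prv p b).val = if p + 1 ≤ b.val then b.val - 1 else n - 1 := by
  simp only [prv]
  rw [Nat.mod_eq_of_lt (by omega)]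

variable (n) in
def Qset (p : ℕ) : Finset (Fin n) := univ.filter (fun x => ¬ x.val < p)

lemma mem_Qset {p : ℕ} {x : Fin n} : x ∈ Qset n p ↔ p ≤ x.val := by
  simp [Qset, Nat.not_lt]

variable (n) in
def cycSet (p : ℕ) : Finset (Finset (Fin n)) := (Qset n p).image (fun x => {x, nxt p x})

variable (n) in
def FF (p : ℕ) (s : Finset (Fin n)) : ℤ :=
  (∏ x ∈ s, eps p x) + (if s ∈ cycSet n p then 1 else 0)

section Props

variable {p : ℕ} (hpn : p + 5 ≤ n)
include hpn

lemma nxt_mem_Qset {x : Fin n} (hx : x ∈ Qset n p) : nxt p x ∈ Qset n p := by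
  rw [mem_Qset] at hx ⊢
  rw [nxt_val p (by omega)]
  split <;> omega

lemma nxt_ne {x : Fin n} (hx : x ∈ Qset n p) : nxt p x ≠ x := by
  rw [mem_Qset] at hx
  have h := nxt_val p (by omega) x
  have hxlt := x.isLt
  intro hEq
  rw [hEq] at h
  split at h <;> omega

lemma nxt_nxt_ne {x : Fin n} (hx : x ∈ Qset n p) : nxt p (nxt p x) ≠ x := by
  rw [mem_Qset] at hx
  have h1 := nxt_val p (by omega) x
  have h2 := nxt_val p (by omega) (nxt p x)
  have hxlt := x.isLt
  intro hEq
  rw [hEq] at h2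
  split at h1 <;> split at h2 <;> omega

lemma nxt_injOn {x y : Fin n} (hx : x ∈ Qset n p) (hy : y ∈ Qset n p)
    (h : nxt p x = nxt p y) : x = y := by
  rw [mem_Qset] at hx hy
  have h1 := nxt_val p (by omega) x
  have h2 := nxt_val p (by omega) y
  have : (nxt p x).val = (nxt p y).val := by rw [h]
  have hxlt := x.isLt
  have hylt := y.isLt
  apply Fin.ext
  rw [h1, h2] at this
  split at this <;> split at this <;> omega

lemma edge_injOn {x y : Fin n} (hx : x ∈ Qset n p) (hy : y ∈ Qset n p)
    (h : ({x, nxt p x} : Finset (Fin n)) = {y, nxt p y}) : x = y := by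
  have hxy : x ∈ ({y, nxt p y} : Finset (Fin n)) := by rw [← h]; simp
  rcases Finset.mem_insert.1 hxy with h1 | h1
  · exact h1
  · rw [Finset.mem_singleton] at h1
    have hyx : y ∈ ({x, nxt p x} : Finset (Fin n)) := by rw [h]; simp
    rcases Finset.mem_insert.1 hyx with h2 | h2
    · exact h2.symm
    · rw [Finset.mem_singleton] at h2
      exfalso
      exact nxt_nxt_ne hpn hy (by rw [← h1, ← h2])

lemma edge_card {x : Fin n} (hx : x ∈ Qset n p) :
    ({x, nxt p x} : Finset (Fin n)).card = 2 :=
  Finset.card_pair (nxt_ne hpn hx).symm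

lemma cyc_card_two {c : Finset (Fin n)} (hc : c ∈ cycSet n p) : c.card = 2 := by
  obtain ⟨x, hx, rfl⟩ := Finset.mem_image.1 hc
  exact edge_card hpn hx

lemma cyc_subset_Q {c : Finset (Fin n)} (hc : c ∈ cycSet n p) : c ⊆ Qset n p := by
  obtain ⟨x, hx, rfl⟩ := Finset.mem_image.1 hc
  intro y hy
  rcases Finset.mem_insert.1 hy with rfl | hy
  · exact hx
  · rw [Finset.mem_singleton] at hy
    subst hy
    exact nxt_mem_Qset hpn hx

lemma cyc_prod_eps {c : Finset (Fin n)} (hc : c ∈ cycSet n p) :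
    ∏ x ∈ c, eps p x = 1 := by
  obtain ⟨x, hx, rfl⟩ := Finset.mem_image.1 hc
  rw [Finset.prod_pair (nxt_ne hpn hx).symm]
  have h1 : eps p x = -1 := by
    unfold eps
    rw [if_neg]
    rw [mem_Qset] at hx; omega
  have h2 : eps p (nxt p x) = -1 := by
    have := nxt_mem_Qset hpn hx
    rw [mem_Qset] at this
    unfold eps
    rw [if_neg]
    omega
  rw [h1, h2]; norm_num

end Props

end KneserAux

section Counting

variable {n : ℕ} {p : ℕ}

lemma card_Pfilter (hp : p ≤ n) :
    ((univ : Finset (Fin n)).filter fun x => x.val < p).card = p := by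
  rw [← Finset.card_image_of_injOn (Fin.val_injective.injOn)]
  have : ((univ : Finset (Fin n)).filter fun x => x.val < p).image Fin.val
      = Finset.range p := by
    ext i
    simp only [Finset.mem_image, Finset.mem_filter, Finset.mem_univ, true_and,
      Finset.mem_range]
    constructor
    · rintro ⟨x, hx, rfl⟩; exact hx
    · intro hi; exact ⟨⟨i, lt_of_lt_of_le hi hp⟩, hi, rfl⟩
  rw [this, Finset.card_range]

lemma card_Qset (hp : p ≤ n) : (Qset n p).card = n - p := by
  have h := Finset.card_filter_add_card_filter_not
    (s := (univ : Finset (Fin n))) (fun x : Fin n => x.val < p)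
  rw [card_Pfilter hp] at h
  have : (Qset n p).card + p = n := by
    unfold Qset
    simp only [Finset.card_univ, Fintype.card_fin] at h ⊢
    omega
  omega

variable (hpn : p + 5 ≤ n)
include hpn

lemma card_cycSet : (cycSet n p).card = n - p := by
  rw [cycSet, Finset.card_image_of_injOn, card_Qset (by omega)]
  intro x hx y hy h
  exact edge_injOn hpn hx hy h

lemma prv_mem_Qset {b : Fin n} (hb : b ∈ Qset n p) : prv p b ∈ Qset n p := by
  rw [mem_Qset] at hb ⊢
  rw [prv_val p (by omega)]
  have := b.isLt
  split <;> omega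

lemma nxt_prv {b : Fin n} (hb : b ∈ Qset n p) : nxt p (prv p b) = b := by
  rw [mem_Qset] at hb
  have h1 := prv_val p (by omega : 0 < n) b
  have h2 := nxt_val p (by omega : p < n) (prv p b)
  have hblt := b.isLt
  apply Fin.ext
  rw [h2, h1]
  split_ifs <;> omega

lemma prv_ne {b : Fin n} (hb : b ∈ Qset n p) : prv p b ≠ b := by
  rw [mem_Qset] at hb
  have h1 := prv_val p (by omega : 0 < n) b
  have hblt := b.isLt
  intro hEq
  rw [hEq] at h1
  split at h1 <;> omega

lemma mem_edge_iff {b x : Fin n} (hb : b ∈ Qset n p) (hx : x ∈ Qset n p) :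
    b ∈ ({x, nxt p x} : Finset (Fin n)) ↔ x = b ∨ x = prv p b := by
  simp only [Finset.mem_insert, Finset.mem_singleton]
  constructor
  · rintro (rfl | rfl)
    · left; rfl
    · right
      apply nxt_injOn hpn hx (prv_mem_Qset hpn hb)
      rw [nxt_prv hpn hb]
  · rintro (rfl | rfl)
    · left; rfl
    · right; rw [nxt_prv hpn hb]

lemma cyc_filter_memQ {b : Fin n} (hb : b ∈ Qset n p) :
    ((cycSet n p).filter (fun c => b ∈ c)).card = 2 := by
  rw [cycSet, Finset.filter_image]
  have hQf : (Qset n p).filter (fun x => b ∈ ({x, nxt p x} : Finset (Fin n)))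
      = {b, prv p b} := by
    ext x
    constructor
    · intro hx'
      rw [Finset.mem_filter] at hx'
      obtain ⟨hx, hmem⟩ := hx'
      rcases (mem_edge_iff hpn hb hx).1 hmem with rfl | rfl
      · exact Finset.mem_insert_self _ _
      · exact Finset.mem_insert_of_mem (Finset.mem_singleton_self _)
    · intro hx'
      rw [Finset.mem_filter]
      rcases Finset.mem_insert.1 hx' with rfl | hx''
      · exact ⟨hb, (mem_edge_iff hpn hb hb).2 (Or.inl rfl)⟩
      · rw [Finset.mem_singleton] at hx''
        subst hx''
        exact ⟨prv_mem_Qset hpn hb,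
          (mem_edge_iff hpn hb (prv_mem_Qset hpn hb)).2 (Or.inr rfl)⟩
  rw [hQf]
  rw [Finset.card_image_of_injOn, Finset.card_pair (prv_ne hpn hb).symm]
  intro x hx y hy h
  have hxQ : x ∈ Qset n p := by
    rcases Finset.mem_insert.1 hx with rfl | hx'
    · exact hb
    · rw [Finset.mem_singleton] at hx'; subst hx'; exact prv_mem_Qset hpn hb
  have hyQ : y ∈ Qset n p := by
    rcases Finset.mem_insert.1 hy with rfl | hy'
    · exact hb
    · rw [Finset.mem_singleton] at hy'; subst hy'; exact prv_mem_Qset hpn hb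
  exact edge_injOn hpn hxQ hyQ h

lemma cyc_filter_memP {a : Fin n} (ha : a.val < p) :
    ((cycSet n p).filter (fun c => a ∈ c)) = ∅ := by
  rw [Finset.filter_eq_empty_iff]
  intro c hc hac
  have := mem_Qset.1 (cyc_subset_Q hpn hc hac)
  omega

end Counting

section Sums

variable {n p : ℕ}

lemma sum_FF_pc2 (hpn : p + 5 ≤ n) (R : Finset (Fin n)) :
    ∑ s ∈ R.powersetCard 2, FF n p s
      = (∑ s ∈ R.powersetCard 2, ∏ x ∈ s, eps p x)
        + ((cycSet n p).filter (fun c => c ⊆ R)).card := by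
  unfold FF
  rw [Finset.sum_add_distrib]
  congr 1
  rw [Finset.sum_boole]
  norm_num
  congr 1
  ext c
  simp only [Finset.mem_filter, Finset.mem_powersetCard]
  constructor
  · rintro ⟨⟨hsub, _⟩, hc⟩
    exact ⟨hc, hsub⟩
  · rintro ⟨hc, hsub⟩
    exact ⟨⟨hsub, cyc_card_two hpn hc⟩, hc⟩

lemma count_split (hpn : p + 5 ≤ n) (a b : Fin n) :
    ((cycSet n p).filter (fun c => a ∈ c ∨ b ∈ c)).card
      + ((cycSet n p).filter (fun c => ¬(a ∈ c ∨ b ∈ c))).card = n - p := by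
  rw [Finset.card_filter_add_card_filter_not, card_cycSet hpn]

lemma card_filter_mem_le (hpn : p + 5 ≤ n) (a : Fin n) :
    ((cycSet n p).filter (fun c => a ∈ c)).card ≤ 2 := by
  by_cases ha : a.val < p
  · rw [cyc_filter_memP hpn ha]; simp
  · rw [cyc_filter_memQ hpn (mem_Qset.2 (by omega))]

lemma card_filter_or_le (hpn : p + 5 ≤ n) (a b : Fin n) :
    ((cycSet n p).filter (fun c => a ∈ c ∨ b ∈ c)).card ≤ 4 := by
  rw [Finset.filter_or]
  calc _ ≤ ((cycSet n p).filter (fun c => a ∈ c)).card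
        + ((cycSet n p).filter (fun c => b ∈ c)).card := Finset.card_union_le _ _
    _ ≤ 4 := by
        have := card_filter_mem_le hpn a
        have := card_filter_mem_le hpn b
        omega

lemma sum_eps_univ (hpn : p + 5 ≤ n) :
    ∑ x : Fin n, eps p x = (p : ℤ) - (↑(n - p) : ℤ) := by
  have h := Finset.sum_filter_add_sum_filter_not (univ : Finset (Fin n))
    (fun x => x.val < p) (eps p)
  have hs1 : ∑ x ∈ (univ : Finset (Fin n)).filter (fun x => x.val < p), eps p x
      = (p : ℤ) := by
    have hone : ∀ x ∈ (univ : Finset (Fin n)).filter (fun x => x.val < p),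
        eps p x = 1 := by
      intro x hx
      unfold eps
      rw [if_pos (Finset.mem_filter.1 hx).2]
    rw [Finset.sum_congr rfl hone, Finset.sum_const, card_Pfilter (by omega : p ≤ n)]
    simp
  have hs2 : ∑ x ∈ (univ : Finset (Fin n)).filter (fun x => ¬ x.val < p), eps p x
      = -(↑(n - p) : ℤ) := by
    have hcQ : ((univ : Finset (Fin n)).filter (fun x => ¬ x.val < p)).card = n - p :=
      card_Qset (by omega : p ≤ n)
    have hone : ∀ x ∈ (univ : Finset (Fin n)).filter (fun x => ¬ x.val < p),
        eps p x = -1 := by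
      intro x hx
      unfold eps
      rw [if_neg (Finset.mem_filter.1 hx).2]
    rw [Finset.sum_congr rfl hone, Finset.sum_const, hcQ]
    simp
  rw [hs1, hs2] at h
  rw [← h]
  ring

end Sums

section MainBound

lemma eps_lt {n p : ℕ} {a : Fin n} (h : a.val < p) : eps p a = 1 := by
  unfold eps; rw [if_pos h]

lemma eps_ge {n p : ℕ} {a : Fin n} (h : ¬ a.val < p) : eps p a = -1 := by
  unfold eps; rw [if_neg h]

lemma notcyc_of_memP {n p : ℕ} (hpn : p + 5 ≤ n) {v : Finset (Fin n)} {a : Fin n}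
    (ha : a ∈ v) (haP : a.val < p) : v ∉ cycSet n p := by
  intro h
  have := mem_Qset.1 (cyc_subset_Q hpn h ha)
  omega

lemma closed_mixed {n p k : ℕ} (hpn : p + 5 ≤ n) (hnk : n = 2*k+1) (hpk : p = k+2)
    (v : Finset (Fin n)) (a b : Fin n) (hab : a ≠ b) (hv : v = {a, b})
    (hA : a.val < p) (hB : ¬ b.val < p) :
    1 ≤ FF n p v + ∑ s ∈ ((univ : Finset (Fin n)) \ v).powersetCard 2, FF n p s := by
  have hvcard : v.card = 2 := by rw [hv, Finset.card_pair hab]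
  have hsplit := sum_FF_pc2 hpn ((univ : Finset (Fin n)) \ v)
  have he2 := two_mul_esymm2 (eps p) (eps_sq p) ((univ : Finset (Fin n)) \ v)
  have hRcard : ((univ : Finset (Fin n)) \ v).card = n - 2 := by
    rw [Finset.card_sdiff_of_subset (Finset.subset_univ _), hvcard]
    simp
  have hsub := Finset.sum_sdiff_eq_sub (Finset.subset_univ v) (f := eps p)
  have hpair : ∑ x ∈ v, eps p x = eps p a + eps p b := by
    rw [hv, Finset.sum_pair hab]
  have hTR : ∑ x ∈ (univ : Finset (Fin n)) \ v, eps p x = 3 := by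
    rw [hsub, sum_eps_univ hpn, hpair, eps_lt hA, eps_ge hB]
    have h1 : (↑(n - p) : ℤ) = (n : ℤ) - p := by
      rw [Nat.cast_sub (by omega)]
    rw [h1]
    have h2 : (n : ℤ) = 2 * k + 1 := by exact_mod_cast hnk
    have h3 : (p : ℤ) = k + 2 := by exact_mod_cast hpk
    rw [h2, h3]; ring
  have hfiltereq : (cycSet n p).filter (fun c => c ⊆ (univ : Finset (Fin n)) \ v)
      = (cycSet n p).filter (fun c => ¬(a ∈ c ∨ b ∈ c)) := by
    apply Finset.filter_congr
    intro c _
    rw [hv]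
    simp only [Finset.subset_sdiff, Finset.subset_univ, true_and,
      Finset.disjoint_insert_right, Finset.disjoint_singleton_right]
    tauto
  have hAeq : (cycSet n p).filter (fun c => a ∈ c ∨ b ∈ c)
      = (cycSet n p).filter (fun c => b ∈ c) := by
    apply Finset.filter_congr
    intro c hc
    constructor
    · rintro (h | h)
      · exact absurd (mem_Qset.1 (cyc_subset_Q hpn hc h)) (by omega)
      · exact h
    · intro h; exact Or.inr h
  have hcnt := count_split hpn a b
  rw [hAeq, cyc_filter_memQ hpn (mem_Qset.2 (by omega))] at hcnt
  have hfv : FF n p v = -1 := by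
    unfold FF
    rw [if_neg (notcyc_of_memP hpn (by rw [hv]; exact Finset.mem_insert_self _ _) hA),
      hv, Finset.prod_pair hab, eps_lt hA, eps_ge hB]
    ring
  rw [hsplit, hfiltereq, hfv]
  rw [hTR, hRcard] at he2
  have hC : (((cycSet n p).filter (fun c => ¬(a ∈ c ∨ b ∈ c))).card : ℤ)
      = (n : ℤ) - p - 2 := by
    have h1 : ((cycSet n p).filter (fun c => ¬(a ∈ c ∨ b ∈ c))).card = n - p - 2 := by
      omega
    rw [h1, Nat.cast_sub (by omega), Nat.cast_sub (by omega)]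
    push_cast
    ring
  have hn2 : (↑(n - 2) : ℤ) = (n : ℤ) - 2 := by rw [Nat.cast_sub (by omega)]; push_cast; ring
  rw [hn2] at he2
  have h2 : (n : ℤ) = 2 * k + 1 := by exact_mod_cast hnk
  have h3 : (p : ℤ) = k + 2 := by exact_mod_cast hpk
  rw [hC]
  linarith [he2]

lemma main_bound {n p k : ℕ} (hpn : p + 5 ≤ n) (hnk : n = 2*k+1) (hpk : p = k+2)
    (v : Finset (Fin n)) (hvcard : v.card = 2) :
    1 ≤ FF n p v + ∑ s ∈ ((univ : Finset (Fin n)) \ v).powersetCard 2, FF n p s := by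
  obtain ⟨a, b, hab, hv⟩ := Finset.card_eq_two.1 hvcard
  by_cases hA : a.val < p <;> by_cases hB : b.val < p
  · -- both in P
    have hsplit := sum_FF_pc2 hpn ((univ : Finset (Fin n)) \ v)
    have he2 := two_mul_esymm2 (eps p) (eps_sq p) ((univ : Finset (Fin n)) \ v)
    have hRcard : ((univ : Finset (Fin n)) \ v).card = n - 2 := by
      rw [Finset.card_sdiff_of_subset (Finset.subset_univ _), hvcard]
      simp
    have hsub := Finset.sum_sdiff_eq_sub (Finset.subset_univ v) (f := eps p)
    have hpair : ∑ x ∈ v, eps p x = eps p a + eps p b := by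
      rw [hv, Finset.sum_pair hab]
    have hTR : ∑ x ∈ (univ : Finset (Fin n)) \ v, eps p x = 1 := by
      rw [hsub, sum_eps_univ hpn, hpair, eps_lt hA, eps_lt hB]
      have h1 : (↑(n - p) : ℤ) = (n : ℤ) - p := by rw [Nat.cast_sub (by omega)]
      rw [h1]
      have h2 : (n : ℤ) = 2 * k + 1 := by exact_mod_cast hnk
      have h3 : (p : ℤ) = k + 2 := by exact_mod_cast hpk
      rw [h2, h3]; ring
    have hfiltereq : (cycSet n p).filter (fun c => c ⊆ (univ : Finset (Fin n)) \ v)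
        = (cycSet n p).filter (fun c => ¬(a ∈ c ∨ b ∈ c)) := by
      apply Finset.filter_congr
      intro c _
      rw [hv]
      simp only [Finset.subset_sdiff, Finset.subset_univ, true_and,
        Finset.disjoint_insert_right, Finset.disjoint_singleton_right]
      tauto
    have hAeq : (cycSet n p).filter (fun c => a ∈ c ∨ b ∈ c) = ∅ := by
      rw [Finset.filter_eq_empty_iff]
      rintro c hc (h | h)
      · exact absurd (mem_Qset.1 (cyc_subset_Q hpn hc h)) (by omega)
      · exact absurd (mem_Qset.1 (cyc_subset_Q hpn hc h)) (by omega)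
    have hcnt := count_split hpn a b
    rw [hAeq] at hcnt
    simp only [Finset.card_empty, Nat.zero_add, zero_add] at hcnt
    have hfv : FF n p v = 1 := by
      unfold FF
      rw [if_neg (notcyc_of_memP hpn (by rw [hv]; exact Finset.mem_insert_self _ _) hA),
        hv, Finset.prod_pair hab, eps_lt hA, eps_lt hB]
      ring
    rw [hsplit, hfiltereq, hfv]
    rw [hTR, hRcard] at he2
    have hC : (((cycSet n p).filter (fun c => ¬(a ∈ c ∨ b ∈ c))).card : ℤ)
        = (n : ℤ) - p := by
      rw [hcnt, Nat.cast_sub (by omega)]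
    have hn2 : (↑(n - 2) : ℤ) = (n : ℤ) - 2 := by
      rw [Nat.cast_sub (by omega)]; push_cast; ring
    rw [hn2] at he2
    have h2 : (n : ℤ) = 2 * k + 1 := by exact_mod_cast hnk
    have h3 : (p : ℤ) = k + 2 := by exact_mod_cast hpk
    rw [hC]
    linarith [he2]
  · exact closed_mixed hpn hnk hpk v a b hab hv hA hB
  · exact closed_mixed hpn hnk hpk v b a hab.symm (by rw [hv, Finset.pair_comm]) hB hA
  · -- both in Q
    have hsplit := sum_FF_pc2 hpn ((univ : Finset (Fin n)) \ v)
    have he2 := two_mul_esymm2 (eps p) (eps_sq p) ((univ : Finset (Fin n)) \ v)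
    have hRcard : ((univ : Finset (Fin n)) \ v).card = n - 2 := by
      rw [Finset.card_sdiff_of_subset (Finset.subset_univ _), hvcard]
      simp
    have hsub := Finset.sum_sdiff_eq_sub (Finset.subset_univ v) (f := eps p)
    have hpair : ∑ x ∈ v, eps p x = eps p a + eps p b := by
      rw [hv, Finset.sum_pair hab]
    have hTR : ∑ x ∈ (univ : Finset (Fin n)) \ v, eps p x = 5 := by
      rw [hsub, sum_eps_univ hpn, hpair, eps_ge hA, eps_ge hB]
      have h1 : (↑(n - p) : ℤ) = (n : ℤ) - p := by rw [Nat.cast_sub (by omega)]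
      rw [h1]
      have h2 : (n : ℤ) = 2 * k + 1 := by exact_mod_cast hnk
      have h3 : (p : ℤ) = k + 2 := by exact_mod_cast hpk
      rw [h2, h3]; ring
    have hfiltereq : (cycSet n p).filter (fun c => c ⊆ (univ : Finset (Fin n)) \ v)
        = (cycSet n p).filter (fun c => ¬(a ∈ c ∨ b ∈ c)) := by
      apply Finset.filter_congr
      intro c _
      rw [hv]
      simp only [Finset.subset_sdiff, Finset.subset_univ, true_and,
        Finset.disjoint_insert_right, Finset.disjoint_singleton_right]
      tauto
    have hcnt := count_split hpn a b
    have hle4 := card_filter_or_le hpn a b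
    have hfv : 1 ≤ FF n p v := by
      unfold FF
      rw [hv, Finset.prod_pair hab, eps_ge hA, eps_ge hB]
      split <;> norm_num
    rw [hsplit, hfiltereq]
    rw [hTR, hRcard] at he2
    have hC : ((n : ℤ) - p - 4) ≤ (((cycSet n p).filter (fun c => ¬(a ∈ c ∨ b ∈ c))).card : ℤ) := by
      have h1 : n - p - 4 ≤ ((cycSet n p).filter (fun c => ¬(a ∈ c ∨ b ∈ c))).card := by
        omega
      calc (n : ℤ) - p - 4 ≤ ((n - p - 4 : ℕ) : ℤ) := by
            rw [Nat.cast_sub (by omega), Nat.cast_sub (by omega)]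
            push_cast; ring_nf; omega
        _ ≤ _ := by exact_mod_cast h1
    have hn2 : (↑(n - 2) : ℤ) = (n : ℤ) - 2 := by
      rw [Nat.cast_sub (by omega)]; push_cast; ring
    rw [hn2] at he2
    have h2 : (n : ℤ) = 2 * k + 1 := by exact_mod_cast hnk
    have h3 : (p : ℤ) = k + 2 := by exact_mod_cast hpk
    linarith [he2, hfv, hC]

lemma total_sum {n p k : ℕ} (hpn : p + 5 ≤ n) (hnk : n = 2*k+1) (hpk : p = k+2) :
    ∑ s ∈ (univ : Finset (Fin n)).powersetCard 2, FF n p s = 3 := by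
  have hsplit := sum_FF_pc2 hpn (univ : Finset (Fin n))
  have he2 := two_mul_esymm2 (eps p) (eps_sq p) (univ : Finset (Fin n))
  have hfe : (cycSet n p).filter (fun c => c ⊆ (univ : Finset (Fin n))) = cycSet n p :=
    Finset.filter_true_of_mem (fun c _ => Finset.subset_univ c)
  rw [hfe, card_cycSet hpn] at hsplit
  rw [sum_eps_univ hpn] at he2
  have hun : ((univ : Finset (Fin n))).card = n := by simp
  rw [hun] at he2
  have h1 : (↑(n - p) : ℤ) = (n : ℤ) - p := by rw [Nat.cast_sub (by omega)]
  have h2 : (n : ℤ) = 2 * k + 1 := by exact_mod_cast hnk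
  have h3 : (p : ℤ) = k + 2 := by exact_mod_cast hpk
  rw [h1] at he2 hsplit
  rw [show ((p : ℤ) - ((n : ℤ) - p)) = 3 from by rw [h2, h3]; ring] at he2
  rw [hsplit]
  linarith [he2]

end MainBound



def kneserFF (n p : ℕ) : {s : Finset (Fin n) // s.card = 2} → ℤ := fun u => FF n p u.1

theorem kneser2_signedRomanDomNum_upper_odd (n : ℕ) (hn : 12 ≤ n) (hodd : Odd n) :
    signedRomanDomNum (kneserGraph n 2) ≤ 3 := by
  classical
  obtain ⟨k, hk⟩ := hodd
  have hpn : (k + 2) + 5 ≤ n := by omega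
  have hpk : (k + 2) = k + 2 := rfl
  set p : ℕ := k + 2 with hpdef
  have hvals : ∀ v, kneserFF n p v = -1 ∨ kneserFF n p v = 1 ∨ kneserFF n p v = 2 := by
    intro v
    show FF n p v.1 = -1 ∨ FF n p v.1 = 1 ∨ FF n p v.1 = 2
    obtain ⟨a, b, hab, hv⟩ := Finset.card_eq_two.1 v.2
    unfold FF
    by_cases hc : v.1 ∈ cycSet n p
    · rw [cyc_prod_eps hpn hc, if_pos hc]; norm_num
    · rw [if_neg hc, hv, Finset.prod_pair hab]
      unfold eps
      split_ifs <;> norm_num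
  have hadj_iff : ∀ v u : {s : Finset (Fin n) // s.card = 2},
      (kneserGraph n 2).Adj v u ↔ (v.1 ≠ u.1 ∧ Disjoint v.1 u.1) := by
    intro v u
    constructor
    · rintro ⟨h1, h2⟩
      exact ⟨fun e => h1 (Subtype.ext e), h2⟩
    · rintro ⟨h1, h2⟩
      exact ⟨fun e => h1 (congrArg Subtype.val e), h2⟩
  have h2edge : ∀ v : {s : Finset (Fin n) // s.card = 2},
      ∃ u, (kneserGraph n 2).Adj v u ∧ kneserFF n p u = 2 := by
    intro v
    obtain ⟨a, b, hab, hv⟩ := Finset.card_eq_two.1 v.2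
    have hcnt := count_split hpn a b
    have hle4 := card_filter_or_le hpn a b
    have hne : ((cycSet n p).filter (fun c => ¬(a ∈ c ∨ b ∈ c))).Nonempty := by
      rw [← Finset.card_pos]
      omega
    obtain ⟨c, hc⟩ := hne
    rw [Finset.mem_filter] at hc
    obtain ⟨hcyc, hcnm⟩ := hc
    push_neg at hcnm
    refine ⟨⟨c, cyc_card_two hpn hcyc⟩, ?_, ?_⟩
    · rw [hadj_iff]
      constructor
      · intro hEq
        apply hcnm.1
        have hEq' : v.1 = c := hEq
        rw [← hEq', hv]
        exact Finset.mem_insert_self _ _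
      · rw [hv, Finset.disjoint_left]
        intro x hx
        rcases Finset.mem_insert.1 hx with rfl | hx'
        · exact hcnm.1
        · rw [Finset.mem_singleton] at hx'
          subst hx'
          exact hcnm.2
    · show FF n p c = 2
      unfold FF
      rw [cyc_prod_eps hpn hcyc, if_pos hcyc]
      norm_num
  have hnbr : ∀ v : {s : Finset (Fin n) // s.card = 2},
      ∑ u ∈ Finset.univ.filter (fun u => (kneserGraph n 2).Adj v u), kneserFF n p u
        = ∑ s ∈ ((univ : Finset (Fin n)) \ v.1).powersetCard 2, FF n p s := by
    intro v
    calc ∑ u ∈ Finset.univ.filter (fun u => (kneserGraph n 2).Adj v u), kneserFF n p u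
        = ∑ u : {s : Finset (Fin n) // s.card = 2},
            (if v.1 ≠ u.1 ∧ Disjoint v.1 u.1 then FF n p u.1 else 0) := by
          rw [Finset.sum_filter]
          exact Finset.sum_congr rfl (fun u _ => if_congr (hadj_iff v u) rfl rfl)
      _ = ∑ s ∈ (univ : Finset (Fin n)).powersetCard 2,
            (if v.1 ≠ s ∧ Disjoint v.1 s then FF n p s else 0) :=
          (Finset.sum_subtype (p := fun s : Finset (Fin n) => s.card = 2) _
            (fun s => Finset.mem_powersetCard_univ)
            (fun s => if v.1 ≠ s ∧ Disjoint v.1 s then FF n p s else 0)).symm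
      _ = ∑ s ∈ ((univ : Finset (Fin n)).powersetCard 2).filter
            (fun s => v.1 ≠ s ∧ Disjoint v.1 s), FF n p s :=
          (Finset.sum_filter _ _).symm
      _ = ∑ s ∈ ((univ : Finset (Fin n)) \ v.1).powersetCard 2, FF n p s := by
          congr 1
          ext s
          simp only [Finset.mem_filter, Finset.mem_powersetCard, Finset.subset_sdiff]
          constructor
          · rintro ⟨⟨hsu, hcard⟩, _, hdisj⟩
            exact ⟨⟨hsu, hdisj.symm⟩, hcard⟩
          · rintro ⟨⟨hsu, hdisj⟩, hcard⟩
            refine ⟨⟨hsu, hcard⟩, ?_, hdisj.symm⟩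
            intro hEq
            have hsne : s.Nonempty := Finset.card_pos.1 (by rw [hcard]; norm_num)
            obtain ⟨x, hx⟩ := hsne
            exact (Finset.disjoint_left.1 hdisj hx) (hEq ▸ hx)
  have hclosed : ∀ v, 1 ≤ kneserFF n p v
      + ∑ u ∈ Finset.univ.filter (fun u => (kneserGraph n 2).Adj v u), kneserFF n p u := by
    intro v
    rw [hnbr v]
    exact main_bound hpn hk hpk v.1 v.2
  have htotal : ∑ v, kneserFF n p v = 3 := by
    calc ∑ v, kneserFF n p v
        = ∑ s ∈ (univ : Finset (Fin n)).powersetCard 2, FF n p s :=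
          (Finset.sum_subtype (p := fun s : Finset (Fin n) => s.card = 2) _
            (fun s => Finset.mem_powersetCard_univ) (FF n p)).symm
      _ = 3 := total_sum hpn hk hpk
  unfold signedRomanDomNum
  apply csInf_le
  · refine ⟨-(Fintype.card {s : Finset (Fin n) // s.card = 2} : ℤ), ?_⟩
    rintro w ⟨g, hg, rfl⟩
    have h1 : ∀ v, -1 ≤ g v := by
      intro v; rcases hg.1 v with h | h | h <;> rw [h] <;> norm_num
    calc -(Fintype.card {s : Finset (Fin n) // s.card = 2} : ℤ)
        = ∑ _v : {s : Finset (Fin n) // s.card = 2}, (-1 : ℤ) := by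
          rw [Finset.sum_const, Finset.card_univ, nsmul_eq_mul]; ring
      _ ≤ ∑ v, g v := Finset.sum_le_sum (fun v _ => h1 v)
  · exact ⟨kneserFF n p, ⟨hvals, fun v _ => h2edge v, hclosed⟩, htotal⟩
end

section
/- For every even integer n with n ≥ 12, the signed Roman domination number of the Kneser graph K_{n,2} satisfies γ_sR(K_{n,2}) ≤ 5. -/
/- ====================  auxiliary development  ==================== -/

open Finset
open Fin.NatCast Fin.CommRing

namespace KSRDF

def gfun (m k : ℕ) : ℤ :=
  if k % 2 = 1 then
    if k < 5 then 2 else if k < m + 1 + 3 * (m % 2) then 1 else -1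
  else
    if m % 2 = 1 then (if k + 5 < m then 1 else -1)
    else if k = 2 ∨ k = m + 2 ∨ (6 ≤ k ∧ k < m) then 1 else -1

def Exc (n : ℕ) [NeZero n] : Finset (Finset (Fin n)) :=
  if (n/2) % 2 = 1 then ∅ else
    { {((1:ℕ) : Fin n), ((n/2 + 1 : ℕ) : Fin n)},
      {((n/4 + 1 : ℕ) : Fin n), ((n/2 + n/4 + 1 : ℕ) : Fin n)},
      {((1:ℕ) : Fin n), ((n/4 + 1 : ℕ) : Fin n)} }

def fc (n : ℕ) [NeZero n] (s : Finset (Fin n)) : ℤ :=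
  if s ∈ Exc n then 2 else gfun (n/2) (∑ x ∈ s, x).val

abbrev Vx (n : ℕ) := {s : Finset (Fin n) // s.card = 2}

def Sfun (n : ℕ) [NeZero n] (x : Fin n) : ℤ :=
  ∑ u ∈ univ.filter (fun u : Vx n => x ∈ u.1), fc n u.1

def dsum (n : ℕ) [NeZero n] (x : Fin n) : ℤ :=
  ∑ y ∈ univ.erase x, (if ({x,y} : Finset (Fin n)) ∈ Exc n then 1 else 0)

/- ----- simple value facts ----- -/

lemma gfun_values (m k : ℕ) : gfun m k = -1 ∨ gfun m k = 1 ∨ gfun m k = 2 := by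
  unfold gfun; split_ifs <;> tauto

lemma gfun_even (m k : ℕ) (hk : k % 2 = 0) : gfun m k = -1 ∨ gfun m k = 1 := by
  unfold gfun; split_ifs <;> first | tauto | omega

lemma fc_values (n : ℕ) [NeZero n] (s : Finset (Fin n)) :
    fc n s = -1 ∨ fc n s = 1 ∨ fc n s = 2 := by
  unfold fc; split_ifs
  · tauto
  · exact gfun_values _ _

lemma fc_ge (n : ℕ) [NeZero n] (s : Finset (Fin n)) : -1 ≤ fc n s := by
  rcases fc_values n s with h | h | h <;> omega

/- ----- range sums ----- -/

lemma sum_two (B M : ℕ) (hBM : B ≤ M) :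
    ∑ i ∈ range M, (if i < B then (1:ℤ) else -1) = 2 * B - M := by
  rw [range_eq_Ico, ← Finset.sum_Ico_consecutive _ (Nat.zero_le B) hBM]
  have h1 : ∑ i ∈ Ico 0 B, (if i < B then (1:ℤ) else -1) = B := by
    rw [Finset.sum_congr rfl (fun i hi => if_pos (mem_Ico.mp hi).2)]
    simp
  have h2 : ∑ i ∈ Ico B M, (if i < B then (1:ℤ) else -1) = -((M:ℤ) - B) := by
    rw [Finset.sum_congr rfl (fun i hi => if_neg (by have := (mem_Ico.mp hi).1; omega))]
    simp [Nat.card_Ico]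
    omega
  rw [h1, h2]; omega

lemma sum_three (B M : ℕ) (h2 : 2 ≤ B) (hBM : B ≤ M) :
    ∑ i ∈ range M, (if i < 2 then (2:ℤ) else if i < B then 1 else -1) = 2 * B + 2 - M := by
  rw [range_eq_Ico, ← Finset.sum_Ico_consecutive _ (Nat.zero_le 2) (le_trans h2 hBM),
    ← Finset.sum_Ico_consecutive _ h2 hBM]
  have e1 : ∑ i ∈ Ico 0 2, (if i < 2 then (2:ℤ) else if i < B then 1 else -1) = 4 := by
    rw [show Ico 0 2 = {0,1} from rfl]
    norm_num
  have e2 : ∑ i ∈ Ico 2 B, (if i < 2 then (2:ℤ) else if i < B then 1 else -1) = (B:ℤ) - 2 := by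
    rw [Finset.sum_congr rfl (fun i hi => by
      have h := mem_Ico.mp hi
      rw [if_neg (by omega), if_pos (by omega)])]
    rw [Finset.sum_const, Nat.card_Ico]
    simp
    omega
  have e3 : ∑ i ∈ Ico B M, (if i < 2 then (2:ℤ) else if i < B then 1 else -1) = -((M:ℤ) - B) := by
    rw [Finset.sum_congr rfl (fun i hi => by
      have h := mem_Ico.mp hi
      rw [if_neg (by omega), if_neg (by omega)])]
    simp [Nat.card_Ico]
    omega
  rw [e1, e2, e3]; omega

lemma sum_pm (P : ℕ → Prop) [DecidablePred P] (M : ℕ) :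
    ∑ i ∈ range M, (if P i then (1:ℤ) else -1) = 2 * ((range M).filter P).card - M := by
  rw [Finset.sum_ite, Finset.sum_const, Finset.sum_const]
  have h := Finset.card_filter_add_card_filter_not (s := range M) (p := fun x => P x)
  rw [Finset.card_range] at h
  rw [nsmul_eq_mul, nsmul_eq_mul]
  have e1 : (range M).filter (fun x => P x) = (range M).filter P := rfl
  have e2 : (range M).filter (fun x => ¬ P x) = (range M).filter (fun a => ¬ P a) := rfl
  rw [e1] at *
  rw [← e2] at *
  omega

lemma sum_range_even_odd (h : ℕ → ℤ) (m : ℕ) :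
    ∑ k ∈ range (2*m), h k = ∑ i ∈ range m, h (2*i) + ∑ i ∈ range m, h (2*i+1) := by
  induction m with
  | zero => simp
  | succ m ih =>
      have e : 2 * (m+1) = (2*m + 1) + 1 := by ring
      rw [e, sum_range_succ, sum_range_succ, sum_range_succ, sum_range_succ, ih]
      ring

def Ge (m : ℕ) : ℤ := ∑ i ∈ range m, gfun m (2*i)
def Go (m : ℕ) : ℤ := ∑ i ∈ range m, gfun m (2*i+1)

lemma Go_odd (m p : ℕ) (h : m = 2*p+1) (hp : 3 ≤ p) : Go m = 5 := by
  have hm2 : m % 2 = 1 := by omega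
  have step : ∀ i ∈ range m, gfun m (2*i+1)
      = (if i < 2 then (2:ℤ) else if i < p+2 then 1 else -1) := by
    intro i hi
    unfold gfun
    rw [if_pos (by omega : (2*i+1) % 2 = 1), hm2]
    simp only [show (2*i+1 < 5) ↔ (i < 2) by omega,
      show (2*i+1 < m+1+3*1) ↔ (i < p+2) by omega]
  rw [Go, Finset.sum_congr rfl step, sum_three (p+2) m (by omega) (by omega)]
  omega

lemma Ge_odd (m p : ℕ) (h : m = 2*p+1) (hp : 3 ≤ p) : Ge m = -5 := by
  have hm2 : m % 2 = 1 := by omega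
  have step : ∀ i ∈ range m, gfun m (2*i)
      = (if i < p-2 then (1:ℤ) else -1) := by
    intro i hi
    unfold gfun
    rw [if_neg (by omega : ¬ (2*i) % 2 = 1), if_pos hm2]
    simp only [show (2*i + 5 < m) ↔ (i < p-2) by omega]
  rw [Ge, Finset.sum_congr rfl step, sum_two (p-2) m (by omega)]
  omega

lemma Go_even (m p : ℕ) (h : m = 2*p) (hp : 3 ≤ p) : Go m = 2 := by
  have hm2 : m % 2 = 0 := by omega
  have step : ∀ i ∈ range m, gfun m (2*i+1)
      = (if i < 2 then (2:ℤ) else if i < p then 1 else -1) := by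
    intro i hi
    unfold gfun
    rw [if_pos (by omega : (2*i+1) % 2 = 1), hm2]
    simp only [show (2*i+1 < 5) ↔ (i < 2) by omega,
      show (2*i+1 < m+1+3*0) ↔ (i < p) by omega]
  rw [Go, Finset.sum_congr rfl step, sum_three p m (by omega) (by omega)]
  omega

lemma Ge_even (m p : ℕ) (h : m = 2*p) (hp : 3 ≤ p) : Ge m = -2 := by
  have hm2 : m % 2 = 0 := by omega
  have step : ∀ i ∈ range m, gfun m (2*i)
      = (if (i = 1 ∨ i = p+1 ∨ (3 ≤ i ∧ i < p)) then (1:ℤ) else -1) := by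
    intro i hi
    unfold gfun
    rw [if_neg (by omega : ¬ (2*i) % 2 = 1), if_neg (by omega : ¬ m % 2 = 1)]
    simp only [show (2*i = 2 ∨ 2*i = m + 2 ∨ (6 ≤ 2*i ∧ 2*i < m))
        ↔ (i = 1 ∨ i = p+1 ∨ (3 ≤ i ∧ i < p)) by omega]
  rw [Ge, Finset.sum_congr rfl step, sum_pm]
  have hfil : (range m).filter (fun i => i = 1 ∨ i = p+1 ∨ (3 ≤ i ∧ i < p))
      = insert 1 (insert (p+1) (Ico 3 p)) := by
    ext i
    simp only [mem_filter, mem_range, mem_insert, mem_Ico]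
    omega
  rw [hfil, card_insert_of_notMem (by simp [mem_Ico]; omega),
    card_insert_of_notMem (by simp), Nat.card_Ico]
  omega

/- ----- global sums over Fin n ----- -/

lemma Gtot (m : ℕ) [NeZero (2*m)] :
    ∑ z : Fin (2*m), gfun m z.val = Ge m + Go m := by
  rw [Fin.sum_univ_eq_sum_range (fun k => gfun m k) (2*m), sum_range_even_odd,
    Ge, Go]

lemma sum_doubles (m : ℕ) [NeZero (2*m)] (hm : 1 ≤ m) :
    ∑ x : Fin (2*m), gfun m (x + x).val = 2 * Ge m := by
  have e : ∀ x : Fin (2*m), gfun m (x + x).val = (fun k => gfun m ((k + k) % (2*m))) x.val := by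
    intro x
    simp only [Fin.val_add]
  rw [Finset.sum_congr rfl (fun x _ => e x),
    Fin.sum_univ_eq_sum_range (fun k => gfun m ((k + k) % (2*m))) (2*m),
    range_eq_Ico, ← Finset.sum_Ico_consecutive _ (Nat.zero_le m) (by omega : m ≤ 2*m)]
  have h1 : ∑ k ∈ Ico 0 m, gfun m ((k + k) % (2*m)) = Ge m := by
    rw [Ge, range_eq_Ico]
    refine Finset.sum_congr rfl (fun k hk => ?_)
    have hk' := (mem_Ico.mp hk).2
    rw [Nat.mod_eq_of_lt (by omega), show k + k = 2*k by ring]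
  have h2 : ∑ k ∈ Ico m (2*m), gfun m ((k + k) % (2*m)) = Ge m := by
    rw [Finset.sum_Ico_eq_sum_range, Ge, show 2*m - m = m by omega]
    refine Finset.sum_congr rfl (fun i hi => ?_)
    have hi' := mem_range.mp hi
    rw [show (m + i) + (m + i) = 2*m + 2*i by ring, Nat.add_mod_left,
      Nat.mod_eq_of_lt (by omega)]
  rw [h1, h2]; ring

/- ----- pair utilities ----- -/

lemma pair_eq {α : Type*} [DecidableEq α] {a b c d : α} (h : ({a,b} : Finset α) = {c,d}) :
    (a = c ∧ b = d) ∨ (a = d ∧ b = c) := by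
  have ha : a ∈ ({c,d} : Finset α) := h ▸ (by simp)
  have hb : b ∈ ({c,d} : Finset α) := h ▸ (by simp)
  have hc : c ∈ ({a,b} : Finset α) := h ▸ (by simp)
  have hd : d ∈ ({a,b} : Finset α) := h ▸ (by simp)
  simp at ha hb hc hd
  tauto

lemma exc_odd (n m : ℕ) [NeZero n] (hn : n = 2*m) (hm : m % 2 = 1) : Exc n = ∅ := by
  unfold Exc
  rw [if_pos (by omega)]

section EvenCase
variable (p : ℕ) [NeZero (4*p)] (hp : 3 ≤ p)

lemma exc_even : Exc (4*p) =
    { {((1:ℕ) : Fin (4*p)), ((2*p + 1 : ℕ) : Fin (4*p))},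
      {((p + 1 : ℕ) : Fin (4*p)), ((3*p + 1 : ℕ) : Fin (4*p))},
      {((1:ℕ) : Fin (4*p)), ((p + 1 : ℕ) : Fin (4*p))} } := by
  unfold Exc
  rw [if_neg (by omega)]
  have h2 : (4*p)/2 = 2*p := by omega
  have h4 : (4*p)/4 = p := by omega
  rw [h2, h4, show 2*p + p + 1 = 3*p + 1 by ring]

include hp

lemma val_cast4 (a : ℕ) (ha : a < 4*p) : ((a : Fin (4*p))).val = a :=
  Fin.val_cast_of_lt ha

lemma cast_ne (a b : ℕ) (ha : a < 4*p) (hb : b < 4*p) (hab : a ≠ b) :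
    (a : Fin (4*p)) ≠ (b : Fin (4*p)) := by
  intro h
  apply hab
  have := congrArg Fin.val h
  rwa [val_cast4 p hp a ha, val_cast4 p hp b hb] at this

lemma sum_pair_cast (a b : ℕ) (ha : a < 4*p) (hb : b < 4*p) (hab : a ≠ b) :
    (∑ x ∈ ({(a : Fin (4*p)), (b : Fin (4*p))} : Finset (Fin (4*p))), x).val
      = (a + b) % (4*p) := by
  rw [Finset.sum_pair (cast_ne p hp a b ha hb hab)]
  rw [show ((a : Fin (4*p)) + (b : Fin (4*p))) = ((a + b : ℕ) : Fin (4*p)) by push_cast; ring]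
  exact Fin.val_natCast _ _

lemma gfun_exc (s : Finset (Fin (4*p))) (hs : s ∈ Exc (4*p)) :
    gfun (2*p) (∑ x ∈ s, x).val = 1 := by
  rw [exc_even] at hs
  simp only [mem_insert, mem_singleton] at hs
  rcases hs with h | h | h <;> subst h
  · rw [sum_pair_cast p hp 1 (2*p+1) (by omega) (by omega) (by omega),
      Nat.mod_eq_of_lt (by omega)]
    unfold gfun
    rw [if_neg (by omega), if_neg (by omega), if_pos (by omega)]
  · rw [sum_pair_cast p hp (p+1) (3*p+1) (by omega) (by omega) (by omega),
      show (p+1) + (3*p+1) = 2 + 4*p by ring, Nat.add_mod_right,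
      Nat.mod_eq_of_lt (by omega)]
    unfold gfun
    rw [if_neg (by omega), if_neg (by omega), if_pos (by omega)]
  · rw [sum_pair_cast p hp 1 (p+1) (by omega) (by omega) (by omega),
      Nat.mod_eq_of_lt (by omega), show 1 + (p+1) = p + 2 by ring]
    rcases Nat.even_or_odd p with he | ho
    · have h2 : (p+2) % 2 = 0 := by rcases he with ⟨t, ht⟩; omega
      unfold gfun
      rw [if_neg (by omega), if_neg (by omega), if_pos (by omega)]
    · have h2 : (p+2) % 2 = 1 := by
        rcases ho with ⟨t, ht⟩; omega
      unfold gfun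
      rw [if_pos h2, if_neg (by omega), if_pos (by omega)]

end EvenCase

lemma fc_pair (n m : ℕ) [NeZero n] (hn : n = 2*m) (hm : 6 ≤ m)
    (hexc : ∀ s ∈ Exc n, gfun m (∑ x ∈ s, x).val = 1)
    (x y : Fin n) (hxy : x ≠ y) :
    fc n {x,y} = gfun m ((x+y).val) + (if ({x,y} : Finset (Fin n)) ∈ Exc n then 1 else 0) := by
  have hm2 : n / 2 = m := by omega
  unfold fc
  rw [hm2]
  by_cases h : ({x,y} : Finset (Fin n)) ∈ Exc n
  · rw [if_pos h, if_pos h]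
    have := hexc _ h
    rw [Finset.sum_pair hxy] at this
    rw [this]
    norm_num
  · rw [if_neg h, if_neg h, Finset.sum_pair hxy, add_zero]

/- ----- Sfun machinery ----- -/

lemma other_spec {n : ℕ} [NeZero n] {x : Fin n} {u : Finset (Fin n)}
    (hc : u.card = 2) (hx : x ∈ u) :
    u = {x, (u.erase x).sum id} ∧ (u.erase x).sum id ≠ x := by
  have h1 : (u.erase x).card = 1 := by rw [Finset.card_erase_of_mem hx, hc]
  obtain ⟨y, hy⟩ := Finset.card_eq_one.mp h1
  have hsum : (u.erase x).sum id = y := by rw [hy]; simp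
  have hyx : y ≠ x := by
    have : y ∈ u.erase x := hy ▸ Finset.mem_singleton_self y
    exact (Finset.mem_erase.mp this).1
  refine ⟨?_, hsum ▸ hyx⟩
  rw [hsum, show ({x, y} : Finset (Fin n)) = insert x {y} from rfl, ← hy,
    Finset.insert_erase hx]

lemma Sfun_eq (n : ℕ) [NeZero n] (x : Fin n) :
    Sfun n x = ∑ y ∈ univ.erase x, fc n {x, y} := by
  unfold Sfun
  refine Finset.sum_bij' (i := fun u _ => (u.1.erase x).sum id)
    (j := fun y hy => (⟨{x, y}, Finset.card_pair (Ne.symm (Finset.mem_erase.mp hy).1)⟩ : Vx n))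
    ?_ ?_ ?_ ?_ ?_
  · intro u hu
    have hx : x ∈ u.1 := (Finset.mem_filter.mp hu).2
    exact Finset.mem_erase.mpr ⟨(other_spec u.2 hx).2, Finset.mem_univ _⟩
  · intro y hy
    exact Finset.mem_filter.mpr ⟨Finset.mem_univ _, by simp⟩
  · intro u hu
    have hx : x ∈ u.1 := (Finset.mem_filter.mp hu).2
    exact Subtype.ext (other_spec u.2 hx).1.symm
  · intro y hy
    have hyx : y ≠ x := (Finset.mem_erase.mp hy).1
    simp only
    rw [show ({x, y} : Finset (Fin n)).erase x = {y} from ?_]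
    · simp
    · rw [show ({x, y} : Finset (Fin n)) = insert x {y} from rfl,
        Finset.erase_insert (by simp [hyx.symm])]
  · intro u hu
    have hx : x ∈ u.1 := (Finset.mem_filter.mp hu).2
    exact congrArg (fc n) (other_spec u.2 hx).1

lemma sum_erase_translate (n : ℕ) [NeZero n] (x : Fin n) (h : ℕ → ℤ) :
    ∑ y ∈ univ.erase x, h ((x + y).val)
      = (∑ z : Fin n, h z.val) - h ((x + x).val) := by
  have e1 : ∑ y ∈ univ.erase x, h ((x + y).val)
      = ∑ z ∈ (univ.erase x).map (Equiv.addLeft x).toEmbedding, h z.val := by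
    rw [Finset.sum_map]
    refine Finset.sum_congr rfl (fun y _ => ?_)
    simp [Equiv.addLeft]
  have e2 : (univ.erase x).map (Equiv.addLeft x).toEmbedding = univ.erase (x + x) := by
    rw [Finset.map_erase, Finset.map_univ_equiv]
    simp [Equiv.addLeft]
  rw [e1, e2, ← Finset.sum_erase_add univ (fun z : Fin n => h z.val) (Finset.mem_univ (x+x))]
  ring

lemma sum_ind {α : Type*} [DecidableEq α] [Fintype α] (x : α) (s : Finset α) (hx : x ∉ s) :
    ∑ y ∈ univ.erase x, (if y ∈ s then (1:ℤ) else 0) = s.card := by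
  rw [Finset.sum_ite_mem]
  have h : (univ.erase x) ∩ s = s := by
    ext y
    simp only [Finset.mem_inter, Finset.mem_erase, Finset.mem_univ, true_and, and_true]
    constructor
    · exact fun h => h.2
    · exact fun h => ⟨fun he => hx (he ▸ h), h⟩
  rw [h]
  simp

lemma Sfun_val (n m : ℕ) [NeZero n] (hn : n = 2*m) (hm : 6 ≤ m)
    (hexc : ∀ s ∈ Exc n, gfun m (∑ x ∈ s, x).val = 1)
    (hG : ∑ z : Fin n, gfun m z.val = 0) (x : Fin n) :
    Sfun n x = -(gfun m ((x+x).val)) + dsum n x := by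
  rw [Sfun_eq]
  rw [Finset.sum_congr rfl
    (fun y hy => fc_pair n m hn hm hexc x y (Ne.symm (Finset.mem_erase.mp hy).1))]
  rw [Finset.sum_add_distrib, sum_erase_translate n x (gfun m), hG]
  unfold dsum
  ring

lemma twoW (n : ℕ) [NeZero n] :
    ∑ x : Fin n, Sfun n x = 2 * ∑ u : Vx n, fc n u.1 := by
  unfold Sfun
  calc ∑ x : Fin n, ∑ u ∈ univ.filter (fun u : Vx n => x ∈ u.1), fc n u.1
      = ∑ x : Fin n, ∑ u : Vx n, (if x ∈ u.1 then fc n u.1 else 0) := by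
        refine Finset.sum_congr rfl (fun x _ => ?_)
        rw [Finset.sum_filter]
    _ = ∑ u : Vx n, ∑ x : Fin n, (if x ∈ u.1 then fc n u.1 else 0) := Finset.sum_comm
    _ = ∑ u : Vx n, 2 * fc n u.1 := by
        refine Finset.sum_congr rfl (fun u _ => ?_)
        rw [Finset.sum_ite_mem, Finset.univ_inter, Finset.sum_const, u.2]
        rw [nsmul_eq_mul]
        norm_num
    _ = 2 * ∑ u : Vx n, fc n u.1 := by rw [Finset.mul_sum]

/- ----- dsum evaluation ----- -/

lemma dsum_odd (n m : ℕ) [NeZero n] (hn : n = 2*m) (hm : m % 2 = 1) (x : Fin n) :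
    dsum n x = 0 := by
  unfold dsum
  rw [exc_odd n m hn hm]
  simp

section EvenDsum
variable (p : ℕ) [NeZero (4*p)] (hp : 3 ≤ p)

include hp

lemma mem_exc_pair (x y : Fin (4*p)) :
    (({x,y} : Finset (Fin (4*p))) ∈ Exc (4*p)) ↔
      ((x = ((1:ℕ) : Fin (4*p)) ∧ y = ((2*p+1:ℕ) : Fin (4*p)))
      ∨ (y = ((1:ℕ) : Fin (4*p)) ∧ x = ((2*p+1:ℕ) : Fin (4*p)))
      ∨ (x = ((p+1:ℕ) : Fin (4*p)) ∧ y = ((3*p+1:ℕ) : Fin (4*p)))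
      ∨ (y = ((p+1:ℕ) : Fin (4*p)) ∧ x = ((3*p+1:ℕ) : Fin (4*p)))
      ∨ (x = ((1:ℕ) : Fin (4*p)) ∧ y = ((p+1:ℕ) : Fin (4*p)))
      ∨ (y = ((1:ℕ) : Fin (4*p)) ∧ x = ((p+1:ℕ) : Fin (4*p)))) := by
  rw [exc_even]
  simp only [mem_insert, mem_singleton]
  constructor
  · rintro (h | h | h) <;> rcases pair_eq h with ⟨h1, h2⟩ | ⟨h1, h2⟩ <;> tauto
  · rintro (⟨h1, h2⟩ | ⟨h1, h2⟩ | ⟨h1, h2⟩ | ⟨h1, h2⟩ | ⟨h1, h2⟩ | ⟨h1, h2⟩) <;>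
      subst h1 <;> subst h2 <;> simp [Finset.pair_comm]

lemma dsum_not (x : Fin (4*p))
    (h1 : x ≠ ((1:ℕ) : Fin (4*p))) (h2 : x ≠ ((2*p+1:ℕ) : Fin (4*p)))
    (h3 : x ≠ ((p+1:ℕ) : Fin (4*p))) (h4 : x ≠ ((3*p+1:ℕ) : Fin (4*p))) :
    dsum (4*p) x = 0 := by
  unfold dsum
  refine Finset.sum_eq_zero (fun y hy => ?_)
  rw [if_neg]
  intro hmem
  rcases (mem_exc_pair p hp x y).mp hmem with ⟨h,_⟩|⟨_,h⟩|⟨h,_⟩|⟨_,h⟩|⟨h,_⟩|⟨_,h⟩ <;> tauto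

lemma dsum_s1 : dsum (4*p) ((1:ℕ) : Fin (4*p)) = 2 := by
  unfold dsum
  have n12 := cast_ne p hp 1 (2*p+1) (by omega) (by omega) (by omega)
  have n13 := cast_ne p hp 1 (p+1) (by omega) (by omega) (by omega)
  have n14 := cast_ne p hp 1 (3*p+1) (by omega) (by omega) (by omega)
  have key : ∀ y ∈ univ.erase ((1:ℕ) : Fin (4*p)),
      (if ({((1:ℕ) : Fin (4*p)), y} : Finset (Fin (4*p))) ∈ Exc (4*p) then (1:ℤ) else 0)
      = (if y ∈ ({((2*p+1:ℕ) : Fin (4*p)), ((p+1:ℕ) : Fin (4*p))} : Finset (Fin (4*p))) then 1 else 0) := by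
    intro y hy
    have hy1 : y ≠ ((1:ℕ) : Fin (4*p)) := (Finset.mem_erase.mp hy).1
    refine if_congr ?_ rfl rfl
    rw [mem_exc_pair p hp, Finset.mem_insert, Finset.mem_singleton]
    constructor
    · rintro (⟨_,h⟩|⟨h,_⟩|⟨h,_⟩|⟨_,h⟩|⟨_,h⟩|⟨h,_⟩) <;> tauto
    · rintro (h | h)
      · exact Or.inl ⟨rfl, h⟩
      · exact Or.inr (Or.inr (Or.inr (Or.inr (Or.inl ⟨rfl, h⟩))))
  rw [Finset.sum_congr rfl key, sum_ind]
  · rw [Finset.card_pair (cast_ne p hp (2*p+1) (p+1) (by omega) (by omega) (by omega))]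
    norm_num
  · simp only [Finset.mem_insert, Finset.mem_singleton]
    push_neg
    exact ⟨n12, n13⟩

lemma dsum_s2 : dsum (4*p) ((2*p+1:ℕ) : Fin (4*p)) = 1 := by
  unfold dsum
  have n1 := cast_ne p hp (2*p+1) 1 (by omega) (by omega) (by omega)
  have n3 := cast_ne p hp (2*p+1) (p+1) (by omega) (by omega) (by omega)
  have n4 := cast_ne p hp (2*p+1) (3*p+1) (by omega) (by omega) (by omega)
  have key : ∀ y ∈ univ.erase ((2*p+1:ℕ) : Fin (4*p)),
      (if ({((2*p+1:ℕ) : Fin (4*p)), y} : Finset (Fin (4*p))) ∈ Exc (4*p) then (1:ℤ) else 0)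
      = (if y ∈ ({((1:ℕ) : Fin (4*p))} : Finset (Fin (4*p))) then 1 else 0) := by
    intro y hy
    have hy1 : y ≠ ((2*p+1:ℕ) : Fin (4*p)) := (Finset.mem_erase.mp hy).1
    refine if_congr ?_ rfl rfl
    rw [mem_exc_pair p hp, Finset.mem_singleton]
    constructor
    · rintro (⟨h,_⟩|⟨h,_⟩|⟨h,_⟩|⟨_,h⟩|⟨h,_⟩|⟨_,h⟩) <;> tauto
    · rintro h
      exact Or.inr (Or.inl ⟨h, rfl⟩)
  rw [Finset.sum_congr rfl key, sum_ind]
  · simp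
  · simp only [Finset.mem_singleton]
    exact n1

lemma dsum_s3 : dsum (4*p) ((p+1:ℕ) : Fin (4*p)) = 2 := by
  unfold dsum
  have n1 := cast_ne p hp (p+1) 1 (by omega) (by omega) (by omega)
  have n2 := cast_ne p hp (p+1) (2*p+1) (by omega) (by omega) (by omega)
  have n4 := cast_ne p hp (p+1) (3*p+1) (by omega) (by omega) (by omega)
  have key : ∀ y ∈ univ.erase ((p+1:ℕ) : Fin (4*p)),
      (if ({((p+1:ℕ) : Fin (4*p)), y} : Finset (Fin (4*p))) ∈ Exc (4*p) then (1:ℤ) else 0)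
      = (if y ∈ ({((3*p+1:ℕ) : Fin (4*p)), ((1:ℕ) : Fin (4*p))} : Finset (Fin (4*p))) then 1 else 0) := by
    intro y hy
    have hy1 : y ≠ ((p+1:ℕ) : Fin (4*p)) := (Finset.mem_erase.mp hy).1
    refine if_congr ?_ rfl rfl
    rw [mem_exc_pair p hp, Finset.mem_insert, Finset.mem_singleton]
    constructor
    · rintro (⟨h,_⟩|⟨h,_⟩|⟨_,h⟩|⟨h,_⟩|⟨h,_⟩|⟨h,_⟩) <;> tauto
    · rintro (h | h)
      · exact Or.inr (Or.inr (Or.inl ⟨rfl, h⟩))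
      · exact Or.inr (Or.inr (Or.inr (Or.inr (Or.inr ⟨h, rfl⟩))))
  rw [Finset.sum_congr rfl key, sum_ind]
  · rw [Finset.card_pair (cast_ne p hp (3*p+1) 1 (by omega) (by omega) (by omega))]
    norm_num
  · simp only [Finset.mem_insert, Finset.mem_singleton]
    push_neg
    exact ⟨n4, n1⟩

lemma dsum_s4 : dsum (4*p) ((3*p+1:ℕ) : Fin (4*p)) = 1 := by
  unfold dsum
  have n1 := cast_ne p hp (3*p+1) 1 (by omega) (by omega) (by omega)
  have n2 := cast_ne p hp (3*p+1) (2*p+1) (by omega) (by omega) (by omega)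
  have n3 := cast_ne p hp (3*p+1) (p+1) (by omega) (by omega) (by omega)
  have key : ∀ y ∈ univ.erase ((3*p+1:ℕ) : Fin (4*p)),
      (if ({((3*p+1:ℕ) : Fin (4*p)), y} : Finset (Fin (4*p))) ∈ Exc (4*p) then (1:ℤ) else 0)
      = (if y ∈ ({((p+1:ℕ) : Fin (4*p))} : Finset (Fin (4*p))) then 1 else 0) := by
    intro y hy
    have hy1 : y ≠ ((3*p+1:ℕ) : Fin (4*p)) := (Finset.mem_erase.mp hy).1
    refine if_congr ?_ rfl rfl
    rw [mem_exc_pair p hp, Finset.mem_singleton]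
    constructor
    · rintro (⟨h,_⟩|⟨_,h⟩|⟨h,_⟩|⟨h,_⟩|⟨h,_⟩|⟨_,h⟩) <;> tauto
    · rintro h
      exact Or.inr (Or.inr (Or.inr (Or.inl ⟨h, rfl⟩)))
  rw [Finset.sum_congr rfl key, sum_ind]
  · simp
  · simp only [Finset.mem_singleton]
    exact n3

end EvenDsum


/- ----- per-case global facts ----- -/

section EvenGlobal
variable (p : ℕ) [NeZero (4*p)] (hp : 3 ≤ p)
include hp

lemma hG_even : ∑ z : Fin (4*p), gfun (2*p) z.val = 0 := by
  haveI : NeZero (2*(2*p)) := ⟨by omega⟩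
  have h := Gtot (2*p)
  rw [Ge_even (2*p) p rfl hp, Go_even (2*p) p rfl hp] at h
  rw [show (4*p) = 2*(2*p) by ring]
  rw [h]
  norm_num

lemma hD_even : ∑ x : Fin (4*p), gfun (2*p) ((x + x).val) = -4 := by
  haveI : NeZero (2*(2*p)) := ⟨by omega⟩
  have h := sum_doubles (2*p) (by omega)
  rw [Ge_even (2*p) p rfl hp] at h
  rw [show (4*p) = 2*(2*p) by ring]
  rw [h]
  norm_num

lemma hexc_even : ∀ s ∈ Exc (4*p), gfun (2*p) (∑ x ∈ s, x).val = 1 :=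
  fun s hs => gfun_exc p hp s hs

lemma Sfun_val_even (x : Fin (4*p)) :
    Sfun (4*p) x = -(gfun (2*p) ((x+x).val)) + dsum (4*p) x :=
  Sfun_val (4*p) (2*p) (by ring) (by omega) (hexc_even p hp) (hG_even p hp) x

lemma double_val_even (a : ℕ) (ha : a < 4*p) :
    ((((a:ℕ) : Fin (4*p))) + (((a:ℕ) : Fin (4*p)))).val = (a + a) % (4*p) := by
  rw [Fin.val_add, Fin.val_cast_of_lt ha]

lemma gfun_two : gfun (2*p) 2 = 1 := by
  unfold gfun
  rw [if_neg (by omega), if_neg (by omega), if_pos (by omega)]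

lemma gfun_m2 : gfun (2*p) (2*p+2) = 1 := by
  unfold gfun
  rw [if_neg (by omega), if_neg (by omega), if_pos (by omega)]

lemma double_parity (x : Fin (4*p)) : ((x + x).val) % 2 = 0 := by
  rw [Fin.val_add, show x.val + x.val = 2*x.val by ring]
  have h := Nat.mul_mod_mul_left 2 (x.val) (2*p)
  rw [show 2*(2*p) = 4*p by ring] at h
  omega

lemma Sfun_le_even (x : Fin (4*p)) : Sfun (4*p) x ≤ 1 := by
  rw [Sfun_val_even p hp x]
  by_cases h1 : x = ((1:ℕ) : Fin (4*p))
  · subst h1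
    rw [dsum_s1 p hp, double_val_even p hp 1 (by omega),
      Nat.mod_eq_of_lt (by omega : 1+1 < 4*p), gfun_two p hp]
    norm_num
  by_cases h2 : x = ((2*p+1:ℕ) : Fin (4*p))
  · subst h2
    rw [dsum_s2 p hp, double_val_even p hp (2*p+1) (by omega),
      show (2*p+1) + (2*p+1) = 2 + 4*p by ring, Nat.add_mod_right,
      Nat.mod_eq_of_lt (by omega : 2 < 4*p), gfun_two p hp]
    norm_num
  by_cases h3 : x = ((p+1:ℕ) : Fin (4*p))
  · subst h3
    rw [dsum_s3 p hp, double_val_even p hp (p+1) (by omega),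
      Nat.mod_eq_of_lt (by omega : (p+1)+(p+1) < 4*p),
      show (p+1)+(p+1) = 2*p+2 by ring, gfun_m2 p hp]
    norm_num
  by_cases h4 : x = ((3*p+1:ℕ) : Fin (4*p))
  · subst h4
    rw [dsum_s4 p hp, double_val_even p hp (3*p+1) (by omega),
      show (3*p+1) + (3*p+1) = (2*p+2) + 4*p by ring, Nat.add_mod_right,
      Nat.mod_eq_of_lt (by omega : 2*p+2 < 4*p), gfun_m2 p hp]
    norm_num
  · rw [dsum_not p hp x h1 h2 h3 h4]
    rcases gfun_even (2*p) ((x+x).val) (double_parity p hp x) with h | h <;> rw [h] <;> norm_num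

lemma Sfun_sum_even : ∑ x : Fin (4*p), Sfun (4*p) x = 10 := by
  rw [Finset.sum_congr rfl (fun x _ => Sfun_val_even p hp x), Finset.sum_add_distrib]
  have e1 : ∑ x : Fin (4*p), -(gfun (2*p) ((x+x).val)) = 4 := by
    rw [Finset.sum_neg_distrib, hD_even p hp]
    norm_num
  have n12 := cast_ne p hp 1 (2*p+1) (by omega) (by omega) (by omega)
  have n13 := cast_ne p hp 1 (p+1) (by omega) (by omega) (by omega)
  have n14 := cast_ne p hp 1 (3*p+1) (by omega) (by omega) (by omega)
  have n23 := cast_ne p hp (2*p+1) (p+1) (by omega) (by omega) (by omega)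
  have n24 := cast_ne p hp (2*p+1) (3*p+1) (by omega) (by omega) (by omega)
  have n34 := cast_ne p hp (p+1) (3*p+1) (by omega) (by omega) (by omega)
  have e2 : ∑ x : Fin (4*p), dsum (4*p) x = 6 := by
    rw [← Finset.sum_subset
      (Finset.subset_univ ({((1:ℕ) : Fin (4*p)), ((2*p+1:ℕ) : Fin (4*p)),
        ((p+1:ℕ) : Fin (4*p)), ((3*p+1:ℕ) : Fin (4*p))} : Finset (Fin (4*p))))
      (fun x _ hx => by
        simp only [Finset.mem_insert, Finset.mem_singleton] at hx
        push_neg at hx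
        exact dsum_not p hp x hx.1 hx.2.1 hx.2.2.1 hx.2.2.2)]
    rw [Finset.sum_insert (by
        simp only [Finset.mem_insert, Finset.mem_singleton]
        push_neg
        exact ⟨n12, n13, n14⟩),
      Finset.sum_insert (by
        simp only [Finset.mem_insert, Finset.mem_singleton]
        push_neg
        exact ⟨n23, n24⟩),
      Finset.sum_insert (by
        simp only [Finset.mem_singleton]
        exact n34),
      Finset.sum_singleton,
      dsum_s1 p hp, dsum_s2 p hp, dsum_s3 p hp, dsum_s4 p hp]
    norm_num
  rw [e1, e2]
  norm_num

lemma W_even : ∑ u : Vx (4*p), fc (4*p) u.1 = 5 := by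
  have h := twoW (4*p)
  rw [Sfun_sum_even p hp] at h
  omega

end EvenGlobal

section OddGlobal
variable (m q : ℕ) [NeZero (2*m)] (hmq : m = 2*q+1) (hq : 3 ≤ q)
include hmq hq

lemma hexc_odd : ∀ s ∈ Exc (2*m), gfun m (∑ x ∈ s, x).val = 1 := by
  intro s hs
  rw [exc_odd (2*m) m rfl (by omega)] at hs
  simp at hs

lemma hG_odd : ∑ z : Fin (2*m), gfun m z.val = 0 := by
  have h := Gtot m
  rw [Ge_odd m q hmq hq, Go_odd m q hmq hq] at h
  rw [h]
  norm_num

lemma Sfun_val_odd (x : Fin (2*m)) :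
    Sfun (2*m) x = -(gfun m ((x+x).val)) := by
  have h := Sfun_val (2*m) m rfl (by omega) (hexc_odd m q hmq hq) (hG_odd m q hmq hq) x
  rw [dsum_odd (2*m) m rfl (by omega) x] at h
  rw [h]
  ring

lemma double_parity_odd (x : Fin (2*m)) : ((x + x).val) % 2 = 0 := by
  rw [Fin.val_add, show x.val + x.val = 2*x.val by ring, Nat.mul_mod_mul_left]
  omega

lemma Sfun_le_odd (x : Fin (2*m)) : Sfun (2*m) x ≤ 1 := by
  rw [Sfun_val_odd m q hmq hq x]
  rcases gfun_even m ((x+x).val) (double_parity_odd m q hmq hq x) with h | h <;> rw [h] <;> norm_num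

lemma Sfun_sum_odd : ∑ x : Fin (2*m), Sfun (2*m) x = 10 := by
  rw [Finset.sum_congr rfl (fun x _ => Sfun_val_odd m q hmq hq x), Finset.sum_neg_distrib,
    sum_doubles m (by omega), Ge_odd m q hmq hq]
  norm_num

lemma W_odd : ∑ u : Vx (2*m), fc (2*m) u.1 = 5 := by
  have h := twoW (2*m)
  rw [Sfun_sum_odd m q hmq hq] at h
  omega

end OddGlobal

/- ----- partition identity ----- -/

lemma adj_sum (n : ℕ) [NeZero n] (v : Vx n) (a b : Fin n) (hab : a ≠ b) (hv : v.1 = {a, b}) :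
    ∑ u ∈ univ.filter (fun u : Vx n => a ∉ u.1 ∧ b ∉ u.1), fc n u.1
      = (∑ u : Vx n, fc n u.1) + fc n v.1 - Sfun n a - Sfun n b := by
  have hsplit1 : (∑ u : Vx n, fc n u.1)
      = Sfun n a + ∑ u ∈ univ.filter (fun u : Vx n => ¬ a ∈ u.1), fc n u.1 := by
    rw [Sfun]
    exact (Finset.sum_filter_add_sum_filter_not univ (fun u : Vx n => a ∈ u.1) _).symm
  have hsplit2 : ∑ u ∈ univ.filter (fun u : Vx n => ¬ a ∈ u.1), fc n u.1
      = ∑ u ∈ univ.filter (fun u : Vx n => ¬ a ∈ u.1 ∧ b ∈ u.1), fc n u.1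
        + ∑ u ∈ univ.filter (fun u : Vx n => ¬ a ∈ u.1 ∧ ¬ b ∈ u.1), fc n u.1 := by
    rw [← Finset.sum_filter_add_sum_filter_not
      (univ.filter (fun u : Vx n => ¬ a ∈ u.1)) (fun u => b ∈ u.1), Finset.filter_filter,
      Finset.filter_filter]
  have hsplit3 : Sfun n b
      = ∑ u ∈ univ.filter (fun u : Vx n => b ∈ u.1 ∧ a ∈ u.1), fc n u.1
        + ∑ u ∈ univ.filter (fun u : Vx n => b ∈ u.1 ∧ ¬ a ∈ u.1), fc n u.1 := by
    rw [Sfun, ← Finset.sum_filter_add_sum_filter_not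
      (univ.filter (fun u : Vx n => b ∈ u.1)) (fun u => a ∈ u.1), Finset.filter_filter,
      Finset.filter_filter]
  have hv1 : univ.filter (fun u : Vx n => b ∈ u.1 ∧ a ∈ u.1) = {v} := by
    ext u
    simp only [Finset.mem_filter, Finset.mem_univ, true_and, Finset.mem_singleton]
    constructor
    · rintro ⟨hb, ha⟩
      have hsub : ({a, b} : Finset (Fin n)) ⊆ u.1 := by
        intro z hz
        rcases Finset.mem_insert.mp hz with h | h
        · exact h ▸ ha
        · exact (Finset.mem_singleton.mp h) ▸ hb
      have he : ({a,b} : Finset (Fin n)) = u.1 :=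
        Finset.eq_of_subset_of_card_le hsub (by rw [u.2, Finset.card_pair hab])
      exact Subtype.ext (by rw [he.symm, hv])
    · rintro rfl
      rw [hv]
      constructor <;> simp
  have hcomm : univ.filter (fun u : Vx n => ¬ a ∈ u.1 ∧ b ∈ u.1)
      = univ.filter (fun u : Vx n => b ∈ u.1 ∧ ¬ a ∈ u.1) := by
    apply Finset.filter_congr
    intro u _
    tauto
  rw [hv1, Finset.sum_singleton] at hsplit3
  rw [hcomm] at hsplit2
  have hne1 : ∑ u ∈ univ.filter (fun u : Vx n => a ∉ u.1 ∧ b ∉ u.1), fc n u.1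
      = ∑ u ∈ univ.filter (fun u : Vx n => ¬ a ∈ u.1 ∧ ¬ b ∈ u.1), fc n u.1 := rfl
  rw [hne1]
  linarith [hsplit1, hsplit2, hsplit3]

/- ----- coverage ----- -/

lemma gfun_one (m : ℕ) : gfun m 1 = 2 := by
  unfold gfun
  rw [if_pos (by omega), if_pos (by omega)]

lemma coverage (n m : ℕ) [NeZero n] (hn : n = 2*m) (hm : 6 ≤ m) (v : Vx n) :
    ∃ u : Vx n, (kneserGraph n 2).Adj v u ∧ fc n u.1 = 2 := by
  obtain ⟨a, b, hab, hv⟩ := Finset.card_eq_two.mp v.2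
  have build : ∀ s t : ℕ, s < n → t < n → s + t = n + 1 → s ≠ t →
      a.val ≠ s → a.val ≠ t → b.val ≠ s → b.val ≠ t →
      ∃ u : Vx n, (kneserGraph n 2).Adj v u ∧ fc n u.1 = 2 := by
    intro s t hs ht hst hne ha1 ha2 hb1 hb2
    have hcast : ((s:ℕ) : Fin n) ≠ ((t:ℕ) : Fin n) := by
      intro h
      apply hne
      have := congrArg Fin.val h
      rwa [Fin.val_cast_of_lt hs, Fin.val_cast_of_lt ht] at this
    refine ⟨⟨{((s:ℕ) : Fin n), ((t:ℕ) : Fin n)}, Finset.card_pair hcast⟩, ⟨?_, ?_⟩, ?_⟩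
    · -- v ≠ u
      intro h
      have ha : a ∈ v.1 := by rw [hv]; simp
      have h1 : v.1 = ({((s:ℕ) : Fin n), ((t:ℕ) : Fin n)} : Finset (Fin n)) := by rw [h]
      rw [h1] at ha
      rcases Finset.mem_insert.mp ha with h' | h'
      · exact ha1 (by rw [h', Fin.val_cast_of_lt hs])
      · exact ha2 (by rw [Finset.mem_singleton.mp h', Fin.val_cast_of_lt ht])
    · -- disjoint
      rw [hv]
      rw [Finset.disjoint_left]
      intro z hz hz'
      have hz1 : z = a ∨ z = b := by simpa using hz
      have hz2 : z = ((s:ℕ) : Fin n) ∨ z = ((t:ℕ) : Fin n) := by simpa using hz'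
      rcases hz1 with rfl | rfl <;> rcases hz2 with h' | h'
      · exact ha1 (by rw [h', Fin.val_cast_of_lt hs])
      · exact ha2 (by rw [h', Fin.val_cast_of_lt ht])
      · exact hb1 (by rw [h', Fin.val_cast_of_lt hs])
      · exact hb2 (by rw [h', Fin.val_cast_of_lt ht])
    · -- value
      unfold fc
      split_ifs with h
      · rfl
      · rw [Finset.sum_pair hcast,
          show (((s:ℕ) : Fin n) + ((t:ℕ) : Fin n)) = ((s + t : ℕ) : Fin n) by push_cast; ring,
          Fin.val_natCast, hst, Nat.add_mod_left, Nat.mod_eq_of_lt (by omega)]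
        exact gfun_one _
  have hA : a.val < n := a.isLt
  have hB : b.val < n := b.isLt
  have hAB : a.val ≠ b.val := fun h => hab (Fin.ext h)
  by_cases h1 : a.val ≠ 4 ∧ a.val ≠ n-3 ∧ b.val ≠ 4 ∧ b.val ≠ n-3
  · exact build 4 (n-3) (by omega) (by omega) (by omega) (by omega) h1.1 h1.2.1 h1.2.2.1 h1.2.2.2
  by_cases h2 : a.val ≠ 6 ∧ a.val ≠ n-5 ∧ b.val ≠ 6 ∧ b.val ≠ n-5
  · exact build 6 (n-5) (by omega) (by omega) (by omega) (by omega) h2.1 h2.2.1 h2.2.2.1 h2.2.2.2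
  · exact build 8 (n-7) (by omega) (by omega) (by omega) (by omega)
      (by omega) (by omega) (by omega) (by omega)

/- ----- main core ----- -/

lemma main_core (n m : ℕ) [NeZero n] (hn : n = 2*m) (hm : 6 ≤ m)
    (hSle : ∀ x : Fin n, Sfun n x ≤ 1)
    (hW : ∑ u : Vx n, fc n u.1 = 5) :
    signedRomanDomNum (kneserGraph n 2) ≤ 5 := by
  classical
  have hsrdf : IsSRDF (kneserGraph n 2) (fun u : Vx n => fc n u.1) := by
    refine ⟨fun u => fc_values n u.1, fun v _ => coverage n m hn hm v, fun v => ?_⟩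
    obtain ⟨a, b, hab, hv⟩ := Finset.card_eq_two.mp v.2
    have hfil : Finset.univ.filter (fun u : Vx n => (kneserGraph n 2).Adj v u)
        = Finset.univ.filter (fun u : Vx n => a ∉ u.1 ∧ b ∉ u.1) := by
      ext u
      rw [Finset.mem_filter, Finset.mem_filter]
      simp only [Finset.mem_univ, true_and, kneserGraph]
      constructor
      · rintro ⟨hne, hdisj⟩
        rw [hv, Finset.disjoint_left] at hdisj
        exact ⟨hdisj (by simp), hdisj (by simp)⟩
      · rintro ⟨ha, hb⟩
        refine ⟨?_, ?_⟩
        · intro h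
          exact ha (by rw [← h, hv]; simp)
        · rw [hv, Finset.disjoint_left]
          intro z hz
          rcases Finset.mem_insert.mp hz with h | h
          · exact h ▸ ha
          · exact (Finset.mem_singleton.mp h) ▸ hb
    rw [hfil, adj_sum n v a b hab hv, hW]
    have h1 := hSle a
    have h2 := hSle b
    have h3 := fc_ge n v.1
    linarith
  unfold signedRomanDomNum
  apply csInf_le
  · refine ⟨-(Fintype.card (Vx n) : ℤ), ?_⟩
    rintro w ⟨f, hf, rfl⟩
    have : ∑ v : Vx n, (-1 : ℤ) ≤ ∑ v : Vx n, f v :=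
      Finset.sum_le_sum (fun v _ => by rcases hf.1 v with h | h | h <;> omega)
    calc -(Fintype.card (Vx n) : ℤ) = ∑ v : Vx n, (-1 : ℤ) := by
          rw [Finset.sum_const, Finset.card_univ, nsmul_eq_mul]; ring
      _ ≤ ∑ v : Vx n, f v := this
  · exact ⟨fun u : Vx n => fc n u.1, hsrdf, hW⟩

end KSRDF

theorem kneser2_signedRomanDomNum_upper_even (n : ℕ) (hn : 12 ≤ n) (heven : Even n) :
    signedRomanDomNum (kneserGraph n 2) ≤ 5 := by
  obtain ⟨m, hm⟩ := heven
  haveI : NeZero n := ⟨by omega⟩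
  rcases Nat.even_or_odd m with ⟨p, hp⟩ | ⟨p, hp⟩
  · have h4 : n = 4*p := by omega
    have hp3 : 3 ≤ p := by omega
    subst h4
    exact KSRDF.main_core (4*p) (2*p) (by ring) (by omega)
      (KSRDF.Sfun_le_even p hp3) (KSRDF.W_even p hp3)
  · have h2 : n = 2*m := by omega
    have hp3 : 3 ≤ p := by omega
    subst h2
    haveI : NeZero (2*m) := ⟨by omega⟩
    exact KSRDF.main_core (2*m) m rfl (by omega)
      (KSRDF.Sfun_le_odd m p (by omega) hp3) (KSRDF.W_odd m p (by omega) hp3)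
end

section
/- The Roman domination number of the Kneser graph K_{5,2} equals 6, i.e. γ_R(K_{5,2}) = 6. -/
instance : DecidableRel (kneserGraph 5 2).Adj :=
  fun a b => inferInstanceAs (Decidable (a ≠ b ∧ Disjoint a.1 b.1))

abbrev KV := {s : Finset (Fin 5) // s.card = 2}

def fgood : KV → ℕ := fun v => if v.1 ⊆ {2,3,4} then 2 else 0

lemma upper_mem : (6 : ℕ) ∈ {w | ∃ f, IsRDF (kneserGraph 5 2) f ∧ ∑ v, f v = w} := by
  refine ⟨fgood, ⟨fun v => ?_, fun v h => ?_⟩, ?_⟩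
  · unfold fgood; split <;> omega
  · revert h; revert v; decide
  · decide

lemma deg3 : ∀ v : KV, (kneserGraph 5 2).degree v = 3 := by decide

lemma card10 : (Finset.univ : Finset KV).card = 10 := by decide

lemma lower_bound (f : KV → ℕ) (h : IsRDF (kneserGraph 5 2) f) : 6 ≤ ∑ v, f v := by
  classical
  set G := kneserGraph 5 2 with hG
  set V2 := Finset.univ.filter (fun v : KV => f v = 2) with hV2
  set V1 := Finset.univ.filter (fun v : KV => f v = 1) with hV1
  set V0 := Finset.univ.filter (fun v : KV => f v = 0) with hV0
  have hcover : V0 ⊆ V2.biUnion (fun u => G.neighborFinset u) := by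
    intro v hv
    rw [hV0, Finset.mem_filter] at hv
    obtain ⟨u, hu, hu2⟩ := h.2 v hv.2
    rw [Finset.mem_biUnion]
    exact ⟨u, by simp [hV2, hu2], (G.mem_neighborFinset u v).2 hu.symm⟩
  have h0 : V0.card ≤ 3 * V2.card := by
    calc V0.card ≤ (V2.biUnion (fun u => G.neighborFinset u)).card :=
          Finset.card_le_card hcover
      _ ≤ ∑ u ∈ V2, (G.neighborFinset u).card := Finset.card_biUnion_le
      _ = ∑ _u ∈ V2, 3 := by
          refine Finset.sum_congr rfl fun u _ => ?_
          rw [SimpleGraph.card_neighborFinset_eq_degree]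
          exact deg3 u
      _ = 3 * V2.card := by rw [Finset.sum_const, smul_eq_mul, mul_comm]
  have hdisj : ∀ v : KV, (v ∈ V0 ∧ v ∉ V1 ∧ v ∉ V2) ∨ (v ∉ V0 ∧ v ∈ V1 ∧ v ∉ V2)
      ∨ (v ∉ V0 ∧ v ∉ V1 ∧ v ∈ V2) := by
    intro v
    have := h.1 v
    simp only [hV0, hV1, hV2, Finset.mem_filter, Finset.mem_univ, true_and]
    omega
  have hpart : V0.card + V1.card + V2.card = 10 := by
    rw [← card10]
    have hu : (Finset.univ : Finset KV) = (V0 ∪ V1) ∪ V2 := by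
      ext v
      simp only [Finset.mem_union, Finset.mem_univ, true_iff]
      rcases hdisj v with ⟨a,_,_⟩|⟨_,a,_⟩|⟨_,_,a⟩ <;> tauto
    rw [hu, Finset.card_union_of_disjoint, Finset.card_union_of_disjoint]
    · rw [Finset.disjoint_left]; intro v hv; rcases hdisj v with ⟨_,b,_⟩|⟨a,_,_⟩|⟨a,b,_⟩ <;> tauto
    · rw [Finset.disjoint_left]; intro v hv
      rw [Finset.mem_union] at hv
      rcases hdisj v with ⟨_,_,c⟩|⟨_,_,c⟩|⟨a,b,_⟩ <;> tauto
  have hsum : V1.card + 2 * V2.card ≤ ∑ v, f v := by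
    have hsub : V1 ∪ V2 ⊆ Finset.univ := Finset.subset_univ _
    have hd : Disjoint V1 V2 := by
      rw [Finset.disjoint_left]; intro v hv; rcases hdisj v with ⟨_,b,_⟩|⟨_,_,c⟩|⟨_,b,_⟩ <;> tauto
    calc V1.card + 2 * V2.card = ∑ v ∈ V1, f v + ∑ v ∈ V2, f v := by
          rw [hV1, hV2, Finset.sum_filter, Finset.sum_filter]
          rw [Finset.sum_congr rfl (fun v _ => rfl)]
          congr 1
          · rw [← Finset.sum_filter, ← hV1]
            rw [Finset.sum_congr rfl (fun v hv => ((Finset.mem_filter.1 hv).2 : f v = 1))]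
            simp
            rfl
          · rw [← Finset.sum_filter, ← hV2]
            rw [Finset.sum_congr rfl (fun v hv => ((Finset.mem_filter.1 hv).2 : f v = 2))]
            rw [Finset.sum_const, smul_eq_mul, mul_comm]
      _ = ∑ v ∈ V1 ∪ V2, f v := (Finset.sum_union hd).symm
      _ ≤ ∑ v, f v := Finset.sum_le_sum_of_subset hsub
  omega

theorem kneser52_romanDomNum : romanDomNum (kneserGraph 5 2) = 6 := by
  apply le_antisymm
  · exact Nat.sInf_le upper_mem
  · refine le_csInf ⟨6, upper_mem⟩ ?_
    rintro w ⟨f, hf, rfl⟩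
    exact lower_bound f hf
end

section
/- The Roman domination number of the Kneser graph K_{11,3} equals 10, i.e. γ_R(K_{11,3}) = 10. -/
/-! ### Auxiliary material for the proof -/

section Aux

open Finset



abbrev TS (𝒟 : Finset (Finset (Fin 11))) : Finset (Finset (Fin 11)) :=
  univ.filter (fun s : Finset (Fin 11) => s.card = 3 ∧ ∀ t ∈ 𝒟, ¬Disjoint s t)

-- Helper A
lemma helperA (𝒟 : Finset (Finset (Fin 11))) (x w : Fin 11) (hxw : x ≠ w)
    (h : ∀ t ∈ 𝒟, x ∈ t ∨ w ∈ t) : 9 ≤ (TS 𝒟).card := by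
  have hsub : ((univ \ {x, w}).image (fun z : Fin 11 => ({x, w, z} : Finset (Fin 11)))) ⊆ TS 𝒟 := by
    intro s hs
    simp only [mem_image, mem_sdiff, mem_univ, true_and, mem_insert, mem_singleton] at hs
    obtain ⟨z, hz, rfl⟩ := hs
    push_neg at hz
    simp only [TS, mem_filter, mem_univ, true_and]
    constructor
    · rw [card_insert_of_notMem (by simp [hxw, Ne.symm hz.1]),
        card_insert_of_notMem (by simp [Ne.symm hz.2]), card_singleton]
    · intro t ht hdisj
      rcases h t ht with hx | hw
      · exact (disjoint_left.mp hdisj (by simp)) hx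
      · exact (disjoint_left.mp hdisj (by simp)) hw
  have hcard : ((univ \ {x, w}).image (fun z : Fin 11 => ({x, w, z} : Finset (Fin 11)))).card = 9 := by
    rw [card_image_of_injOn]
    · rw [card_sdiff_of_subset (by simp), card_univ]
      simp [card_insert_of_notMem, hxw]
    · intro z1 h1 z2 h2 heq
      simp only [coe_sdiff, coe_univ, Set.mem_diff, Set.mem_univ, true_and, coe_insert, Set.mem_insert_iff, coe_singleton, Set.mem_singleton_iff, not_or] at h1 h2
      have : z1 ∈ ({x, w, z2} : Finset (Fin 11)) := by simp only at heq; rw [← heq]; simp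
      simp only [mem_insert, mem_singleton] at this
      rcases this with h | h | h
      · exact absurd h h1.1
      · exact absurd h h1.2
      · exact h
  calc 9 = _ := hcard.symm
    _ ≤ _ := card_le_card hsub


-- Helper B: three pairwise disjoint triples (condition phrased abstractly)
lemma helperB (𝒟 : Finset (Finset (Fin 11))) (A B : Finset (Fin 11)) (c : Fin 11)
    (hAB : Disjoint A B) (hA : A.card = 3) (hB : B.card = 3)
    (hcA : c ∉ A) (hcB : c ∉ B)
    (h : ∀ t ∈ 𝒟, t = A ∨ t = B ∨ c ∈ t) : 9 ≤ (TS 𝒟).card := by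
  have hsub : ((A ×ˢ B).image (fun p => ({p.1, p.2, c} : Finset (Fin 11)))) ⊆ TS 𝒟 := by
    intro s hs
    simp only [mem_image, mem_product] at hs
    obtain ⟨⟨y, z⟩, ⟨hy, hz⟩, rfl⟩ := hs
    have hyz : y ≠ z := fun e => disjoint_left.mp hAB hy (e ▸ hz)
    have hyc : y ≠ c := fun e => hcA (e ▸ hy)
    have hzc : z ≠ c := fun e => hcB (e ▸ hz)
    simp only [TS, mem_filter, mem_univ, true_and]
    refine ⟨?_, ?_⟩
    · rw [card_insert_of_notMem (by simp [hyz, hyc]),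
        card_insert_of_notMem (by simp [hzc]), card_singleton]
    · intro t ht hdisj
      rcases h t ht with rfl | rfl | hc
      · exact (disjoint_left.mp hdisj (by simp)) hy
      · exact (disjoint_left.mp hdisj (by simp)) hz
      · exact (disjoint_left.mp hdisj (by simp)) hc
  have hcard : ((A ×ˢ B).image (fun p => ({p.1, p.2, c} : Finset (Fin 11)))).card = 9 := by
    rw [card_image_of_injOn, card_product, hA, hB]
    intro p hp q hq heq
    simp only [coe_product, Set.mem_prod, mem_coe] at hp hq
    simp only at heq
    have h1 : p.1 ∈ ({q.1, q.2, c} : Finset (Fin 11)) := by rw [← heq]; simp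
    have h2 : p.2 ∈ ({q.1, q.2, c} : Finset (Fin 11)) := by rw [← heq]; simp
    simp only [mem_insert, mem_singleton] at h1 h2
    have e1 : p.1 = q.1 := by
      rcases h1 with h | h | h
      · exact h
      · exact absurd (h ▸ hp.1) (fun hh => disjoint_left.mp hAB hh hq.2)
      · exact absurd (h ▸ hp.1) hcA
    have e2 : p.2 = q.2 := by
      rcases h2 with h | h | h
      · exact absurd (h ▸ hp.2) (fun hh => disjoint_left.mp hAB hq.1 hh)
      · exact h
      · exact absurd (h ▸ hp.2) hcB
    exact Prod.ext e1 e2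
  calc (9:ℕ) = _ := hcard.symm
    _ ≤ _ := card_le_card hsub

-- counting lemma: 2-subsets of A ∪ B hitting both A and B
lemma countQ (A B : Finset (Fin 11)) (hA : A.card = 3) (hB : B.card = 3) (hAB : A ≠ B) :
    6 ≤ (((A ∪ B).powersetCard 2).filter
      (fun P => ¬Disjoint P A ∧ ¬Disjoint P B)).card := by
  set Q := ((A ∪ B).powersetCard 2).filter (fun P => ¬Disjoint P A ∧ ¬Disjoint P B) with hQ
  have hc2 : (A ∩ B).card ≤ 2 := by
    by_contra hlt
    push_neg at hlt
    have h3 : (A ∩ B).card = 3 := le_antisymm (hA ▸ card_le_card (inter_subset_left)) hlt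
    have e1 : A ∩ B = A := eq_of_subset_of_card_le inter_subset_left (by omega)
    have e2 : A ∩ B = B := eq_of_subset_of_card_le inter_subset_right (by omega)
    exact hAB (e1.symm.trans e2)
  have hsd1 : (A \ B).card + (A ∩ B).card = 3 := by rw [card_sdiff_add_card_inter]; exact hA
  have hsd2 : (B \ A).card + (A ∩ B).card = 3 := by
    rw [inter_comm, card_sdiff_add_card_inter]; exact hB
  have hun : (A ∪ B).card + (A ∩ B).card = 6 := by
    rw [card_union_add_card_inter, hA, hB]
  -- Q = total \ (bad1 ∪ bad2)
  have hQeq : Q = ((A ∪ B).powersetCard 2) \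
      (((A \ B).powersetCard 2) ∪ ((B \ A).powersetCard 2)) := by
    ext P
    simp only [hQ, mem_filter, mem_sdiff, mem_union, mem_powersetCard, not_or]
    constructor
    · rintro ⟨⟨hsub, hcard⟩, hnA, hnB⟩
      refine ⟨⟨hsub, hcard⟩, ⟨?_, ?_⟩⟩
      · rintro ⟨hsub', -⟩
        exact hnB (disjoint_left.mpr (fun a ha hb => (mem_sdiff.mp (hsub' ha)).2 hb))
      · rintro ⟨hsub', -⟩
        exact hnA (disjoint_left.mpr (fun a ha hb => (mem_sdiff.mp (hsub' ha)).2 hb))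
    · rintro ⟨⟨hsub, hcard⟩, hn1, hn2⟩
      refine ⟨⟨hsub, hcard⟩, ?_, ?_⟩
      · intro hdisj
        exact hn2 ⟨fun a ha => mem_sdiff.mpr ⟨(mem_union.mp (hsub ha)).resolve_left
          (disjoint_left.mp hdisj ha), disjoint_left.mp hdisj ha⟩, hcard⟩
      · intro hdisj
        exact hn1 ⟨fun a ha => mem_sdiff.mpr ⟨(mem_union.mp (hsub ha)).resolve_right
          (disjoint_left.mp hdisj ha), disjoint_left.mp hdisj ha⟩, hcard⟩
  have hdisjbad : Disjoint ((A \ B).powersetCard 2) ((B \ A).powersetCard 2) := by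
    rw [disjoint_left]
    intro P h1 h2
    rw [mem_powersetCard] at h1 h2
    have hPP : P ⊆ (A \ B) ∩ (B \ A) := subset_inter h1.1 h2.1
    have h0 : (A \ B) ∩ (B \ A) = ∅ := by
      ext a; simp only [mem_inter, mem_sdiff, notMem_empty, iff_false]; tauto
    rw [h0, subset_empty] at hPP
    rw [hPP] at h1; simp at h1
  have hsubU : ((A \ B).powersetCard 2) ∪ ((B \ A).powersetCard 2) ⊆ (A ∪ B).powersetCard 2 := by
    intro P hP
    rcases mem_union.mp hP with h | h <;> rw [mem_powersetCard] at h ⊢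
    · exact ⟨h.1.trans ((sdiff_subset).trans subset_union_left), h.2⟩
    · exact ⟨h.1.trans ((sdiff_subset).trans subset_union_right), h.2⟩
  rw [hQeq, card_sdiff_of_subset hsubU, card_union_of_disjoint hdisjbad,
    card_powersetCard, card_powersetCard, card_powersetCard]
  interval_cases hc : (A ∩ B).card
  · have e1 : (A ∪ B).card = 6 := by omega
    have e2 : (A \ B).card = 3 := by omega
    have e3 : (B \ A).card = 3 := by omega
    rw [e1, e2, e3]; decide
  · have e1 : (A ∪ B).card = 5 := by omega
    have e2 : (A \ B).card = 2 := by omega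
    have e3 : (B \ A).card = 2 := by omega
    rw [e1, e2, e3]; decide
  · have e1 : (A ∪ B).card = 4 := by omega
    have e2 : (A \ B).card = 1 := by omega
    have e3 : (B \ A).card = 1 := by omega
    rw [e1, e2, e3]; decide

-- Helper C: double point x plus two triples avoiding x
lemma helperC (𝒟 : Finset (Finset (Fin 11))) (x : Fin 11) (A B : Finset (Fin 11))
    (hA : A.card = 3) (hB : B.card = 3) (hAB : A ≠ B) (hxA : x ∉ A) (hxB : x ∉ B)
    (h : ∀ t ∈ 𝒟, x ∈ t ∨ t = A ∨ t = B) : 6 ≤ (TS 𝒟).card := by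
  set Q := ((A ∪ B).powersetCard 2).filter (fun P => ¬Disjoint P A ∧ ¬Disjoint P B) with hQdef
  have hsub : Q.image (fun P => insert x P) ⊆ TS 𝒟 := by
    intro s hs
    simp only [mem_image] at hs
    obtain ⟨P, hP, rfl⟩ := hs
    simp only [hQdef, mem_filter, mem_powersetCard] at hP
    obtain ⟨⟨hPsub, hPcard⟩, hPA, hPB⟩ := hP
    have hxP : x ∉ P := fun hx => by
      rcases mem_union.mp (hPsub hx) with h' | h'
      · exact hxA h'
      · exact hxB h'
    simp only [TS, mem_filter, mem_univ, true_and]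
    refine ⟨by rw [card_insert_of_notMem hxP, hPcard], ?_⟩
    intro t ht hdisj
    rcases h t ht with hx | rfl | rfl
    · exact (disjoint_left.mp hdisj (mem_insert_self x P)) hx
    · obtain ⟨a, ha⟩ := not_disjoint_iff.mp hPA
      exact (disjoint_left.mp hdisj (mem_insert_of_mem ha.1)) ha.2
    · obtain ⟨a, ha⟩ := not_disjoint_iff.mp hPB
      exact (disjoint_left.mp hdisj (mem_insert_of_mem ha.1)) ha.2
  have hinj : (Q.image (fun P => insert x P)).card = Q.card := by
    apply card_image_of_injOn
    intro P1 h1 P2 h2 heq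
    simp only [hQdef, coe_filter, Set.mem_setOf_eq, mem_powersetCard] at h1 h2
    have hx1 : x ∉ P1 := fun hx => by
      rcases mem_union.mp (h1.1.1 hx) with h' | h'
      · exact hxA h'
      · exact hxB h'
    have hx2 : x ∉ P2 := fun hx => by
      rcases mem_union.mp (h2.1.1 hx) with h' | h'
      · exact hxA h'
      · exact hxB h'
    simp only at heq
    have : (insert x P1).erase x = (insert x P2).erase x := by rw [heq]
    rwa [erase_insert hx1, erase_insert hx2] at this
  have := countQ A B hA hB hAB
  calc (6:ℕ) ≤ Q.card := this
    _ = _ := hinj.symm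
    _ ≤ _ := card_le_card hsub

lemma key (𝒟 : Finset (Finset (Fin 11))) (h3 : ∀ t ∈ 𝒟, t.card = 3)
    (h1 : 1 ≤ 𝒟.card) (h4 : 𝒟.card ≤ 4) : 10 ≤ 𝒟.card + (TS 𝒟).card := by
  classical
  by_cases hdp : ∃ x : Fin 11, ∃ t1 ∈ 𝒟, ∃ t2 ∈ 𝒟, t1 ≠ t2 ∧ x ∈ t1 ∧ x ∈ t2
  · obtain ⟨x, t1, ht1, t2, ht2, hne, hx1, hx2⟩ := hdp
    have hE : 2 ≤ (𝒟.filter (fun t => x ∈ t)).card := by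
      rw [Nat.succ_le_iff]
      exact one_lt_card.mpr ⟨t1, mem_filter.mpr ⟨ht1, hx1⟩, t2, mem_filter.mpr ⟨ht2, hx2⟩, hne⟩
    have hsplit := card_filter_add_card_filter_not (s := 𝒟) (p := fun t => x ∈ t)
    set R := 𝒟.filter (fun t => ¬ x ∈ t) with hRdef
    have hRle : R.card ≤ 2 := by omega
    have hRcases : R.card = 0 ∨ R.card = 1 ∨ R.card = 2 := by omega
    rcases hRcases with h0 | hOne | hTwo
    · rw [card_eq_zero] at h0
      obtain ⟨w, hw⟩ := exists_ne x
      have h9 := helperA 𝒟 x w (Ne.symm hw) (fun t ht => Or.inl (by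
        by_contra hxt
        have : t ∈ R := mem_filter.mpr ⟨ht, hxt⟩
        simp [h0] at this))
      omega
    · obtain ⟨t4, ht4⟩ := card_eq_one.mp hOne
      have ht4m : t4 ∈ R := ht4 ▸ mem_singleton_self t4
      have ht4D : t4 ∈ 𝒟 := (mem_filter.mp ht4m).1
      have hxt4 : x ∉ t4 := (mem_filter.mp ht4m).2
      obtain ⟨w, hw⟩ := card_pos.mp (by rw [h3 t4 ht4D]; norm_num : 0 < t4.card)
      have hxw : x ≠ w := fun e => hxt4 (e ▸ hw)
      have h9 := helperA 𝒟 x w hxw (fun t ht => by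
        by_cases hxt : x ∈ t
        · exact Or.inl hxt
        · have : t ∈ R := mem_filter.mpr ⟨ht, hxt⟩
          rw [ht4, mem_singleton] at this
          exact Or.inr (this ▸ hw))
      omega
    · obtain ⟨A, B, hABne, hABeq⟩ := card_eq_two.mp hTwo
      have hAm : A ∈ R := hABeq ▸ mem_insert_self A {B}
      have hBm : B ∈ R := hABeq ▸ mem_insert_of_mem (mem_singleton_self B)
      have h6 := helperC 𝒟 x A B (h3 A (mem_filter.mp hAm).1) (h3 B (mem_filter.mp hBm).1)
        hABne (mem_filter.mp hAm).2 (mem_filter.mp hBm).2 (fun t ht => by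
          by_cases hxt : x ∈ t
          · exact Or.inl hxt
          · have : t ∈ R := mem_filter.mpr ⟨ht, hxt⟩
            rw [hABeq, mem_insert, mem_singleton] at this
            exact Or.inr this)
      omega
  · push_neg at hdp
    have hpw : ∀ t1 ∈ 𝒟, ∀ t2 ∈ 𝒟, t1 ≠ t2 → Disjoint t1 t2 := by
      intro t1 ht1 t2 ht2 hne
      by_contra hnd
      obtain ⟨a, ha1, ha2⟩ := not_disjoint_iff.mp hnd
      exact (hdp a t1 ht1 t2 ht2 hne) ha1 ha2
    have hk : 𝒟.card = 1 ∨ 𝒟.card = 2 ∨ 𝒟.card = 3 ∨ 𝒟.card = 4 := by omega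
    rcases hk with hk | hk | hk | hk
    · obtain ⟨t, ht⟩ := card_eq_one.mp hk
      have htD : t ∈ 𝒟 := ht ▸ mem_singleton_self t
      obtain ⟨x, hx⟩ := card_pos.mp (by rw [h3 t htD]; norm_num : 0 < t.card)
      obtain ⟨w, hw⟩ := exists_ne x
      have h9 := helperA 𝒟 x w (Ne.symm hw) (fun t' ht' => by
        rw [ht, mem_singleton] at ht'
        exact Or.inl (ht' ▸ hx))
      omega
    · obtain ⟨t1, t2, hne, heq⟩ := card_eq_two.mp hk
      have ht1D : t1 ∈ 𝒟 := heq ▸ mem_insert_self t1 {t2}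
      have ht2D : t2 ∈ 𝒟 := heq ▸ mem_insert_of_mem (mem_singleton_self t2)
      obtain ⟨x, hx⟩ := card_pos.mp (by rw [h3 t1 ht1D]; norm_num : 0 < t1.card)
      obtain ⟨w, hw⟩ := card_pos.mp (by rw [h3 t2 ht2D]; norm_num : 0 < t2.card)
      have hxw : x ≠ w := fun e => disjoint_left.mp (hpw t1 ht1D t2 ht2D hne) hx (e ▸ hw)
      have h9 := helperA 𝒟 x w hxw (fun t ht => by
        rw [heq, mem_insert, mem_singleton] at ht
        rcases ht with rfl | rfl
        · exact Or.inl hx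
        · exact Or.inr hw)
      omega
    · obtain ⟨t1, t2, t3, h12, h13, h23, heq⟩ := card_eq_three.mp hk
      have ht1D : t1 ∈ 𝒟 := by rw [heq]; simp
      have ht2D : t2 ∈ 𝒟 := by rw [heq]; simp
      have ht3D : t3 ∈ 𝒟 := by rw [heq]; simp
      obtain ⟨c, hc⟩ := card_pos.mp (by rw [h3 t3 ht3D]; norm_num : 0 < t3.card)
      have hc1 : c ∉ t1 := fun h => disjoint_left.mp (hpw t3 ht3D t1 ht1D (Ne.symm h13)) hc h
      have hc2 : c ∉ t2 := fun h => disjoint_left.mp (hpw t3 ht3D t2 ht2D (Ne.symm h23)) hc h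
      have h9 := helperB 𝒟 t1 t2 c (hpw t1 ht1D t2 ht2D h12) (h3 t1 ht1D) (h3 t2 ht2D)
        hc1 hc2 (fun t ht => by
          rw [heq] at ht
          simp only [mem_insert, mem_singleton] at ht
          rcases ht with rfl | rfl | rfl
          · exact Or.inl rfl
          · exact Or.inr (Or.inl rfl)
          · exact Or.inr (Or.inr hc))
      omega
    · exfalso
      have hbu : (𝒟.biUnion id).card = ∑ t ∈ 𝒟, t.card := by
        apply card_biUnion
        intro t1 ht1 t2 ht2 hne
        exact hpw t1 ht1 t2 ht2 hne
      have hsum : ∑ t ∈ 𝒟, t.card = 12 := by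
        rw [Finset.sum_congr rfl h3, Finset.sum_const, hk]
        rfl
      have hle : (𝒟.biUnion id).card ≤ 11 := by
        calc (𝒟.biUnion id).card ≤ (univ : Finset (Fin 11)).card := card_le_univ _
          _ = 11 := by simp
      omega


/-- The five triples used for the weight-10 RDF. -/
def rdD0 : Finset (Finset (Fin 11)) := {{9,10,0},{9,10,1},{0,1,2},{3,4,5},{6,7,8}}

lemma rdD0_dominates' : ∀ a b c : Fin 11, ∃ t ∈ rdD0, Disjoint ({a,b,c} : Finset (Fin 11)) t := by
  decide

lemma rdD0_dominates : ∀ s : Finset (Fin 11), s.card = 3 → ∃ t ∈ rdD0, Disjoint s t := by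
  intro s hs
  obtain ⟨a, b, c, -, -, -, rfl⟩ := Finset.card_eq_three.mp hs
  exact rdD0_dominates' a b c

lemma rdD0_cards : ∀ t ∈ rdD0, t.card = 3 := by
  intro t ht
  fin_cases ht <;> rfl

lemma lowerBound (f : {s : Finset (Fin 11) // s.card = 3} → ℕ)
    (hf : IsRDF (kneserGraph 11 3) f) : 10 ≤ ∑ v, f v := by
  classical
  by_contra hcon
  push_neg at hcon
  set D := Finset.univ.filter (fun v : {s : Finset (Fin 11) // s.card = 3} => f v = 2) with hD
  set X := Finset.univ.filter (fun v : {s : Finset (Fin 11) // s.card = 3} => f v = 1) with hX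
  have hDX : Disjoint D X := by
    rw [disjoint_left]
    intro v hv hv2
    rw [hD, mem_filter] at hv
    rw [hX, mem_filter] at hv2
    omega
  have hDsum : ∑ v ∈ D, f v = 2 * D.card := by
    rw [Finset.sum_congr rfl (fun v hv => (mem_filter.mp hv).2), Finset.sum_const,
      smul_eq_mul, mul_comm]
  have hXsum : ∑ v ∈ X, f v = X.card := by
    rw [Finset.sum_congr rfl (fun v hv => (mem_filter.mp hv).2), Finset.sum_const,
      smul_eq_mul, mul_one]
  have hsum_ge : ∑ v ∈ D, f v + ∑ v ∈ X, f v ≤ ∑ v, f v := by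
    rw [← Finset.sum_union hDX]
    exact Finset.sum_le_sum_of_subset (Finset.subset_univ _)
  by_cases hD0 : D = ∅
  · have hall : ∀ v, 1 ≤ f v := by
      intro v
      rcases Nat.eq_zero_or_pos (f v) with h0 | h
      · obtain ⟨u, hadj, hu2⟩ := hf.2 v h0
        have : u ∈ D := mem_filter.mpr ⟨mem_univ _, hu2⟩
        rw [hD0] at this
        exact absurd this (notMem_empty _)
      · exact h
    have hbig : Fintype.card {s : Finset (Fin 11) // s.card = 3} ≤ ∑ v, f v := by
      calc Fintype.card {s : Finset (Fin 11) // s.card = 3}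
          = ∑ _v : {s : Finset (Fin 11) // s.card = 3}, 1 := by
            rw [Finset.sum_const, smul_eq_mul, mul_one, Finset.card_univ]
        _ ≤ ∑ v, f v := Finset.sum_le_sum (fun v _ => hall v)
    rw [Fintype.card_finset_len, Fintype.card_fin] at hbig
    have h165 : Nat.choose 11 3 = 165 := by decide
    omega
  · have hDne : D.Nonempty := Finset.nonempty_iff_ne_empty.mpr hD0
    set 𝒟 := D.image Subtype.val with h𝒟
    have hinj : 𝒟.card = D.card := card_image_of_injective D Subtype.val_injective
    have h3 : ∀ t ∈ 𝒟, t.card = 3 := by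
      intro t ht
      obtain ⟨v, -, rfl⟩ := mem_image.mp ht
      exact v.2
    have hk1 : 1 ≤ 𝒟.card := by
      rw [hinj]
      exact card_pos.mpr hDne
    have hk4 : 𝒟.card ≤ 4 := by omega
    have hkey := key 𝒟 h3 hk1 hk4
    set T := Finset.univ.filter
      (fun v : {s : Finset (Fin 11) // s.card = 3} => ∀ u ∈ D, ¬Disjoint v.1 u.1) with hT
    have hTS : TS 𝒟 = T.image Subtype.val := by
      ext s
      simp only [TS, hT, mem_filter, mem_univ, true_and, mem_image]
      constructor
      · rintro ⟨hcard, hhit⟩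
        exact ⟨⟨s, hcard⟩, fun u hu => hhit u.1 (mem_image_of_mem _ hu), rfl⟩
      · rintro ⟨v, hv, rfl⟩
        refine ⟨v.2, ?_⟩
        intro t ht
        obtain ⟨u, hu, rfl⟩ := mem_image.mp ht
        exact hv u hu
    have hTcard : (TS 𝒟).card = T.card := by
      rw [hTS]
      exact card_image_of_injective _ Subtype.val_injective
    have hTsub : T ⊆ D ∪ X := by
      intro v hv
      have hle2 := hf.1 v
      have hv3 : f v = 0 ∨ f v = 1 ∨ f v = 2 := by omega
      rcases hv3 with h0 | h1 | h2
      · obtain ⟨u, hadj, hu2⟩ := hf.2 v h0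
        have huD : u ∈ D := mem_filter.mpr ⟨mem_univ _, hu2⟩
        exact absurd (hadj : v ≠ u ∧ Disjoint v.1 u.1).2 ((mem_filter.mp hv).2 u huD)
      · exact mem_union_right _ (mem_filter.mpr ⟨mem_univ _, h1⟩)
      · exact mem_union_left _ (mem_filter.mpr ⟨mem_univ _, h2⟩)
    have hTle : T.card ≤ D.card + X.card :=
      le_trans (card_le_card hTsub) (card_union_le _ _)
    omega

lemma upperBound : ∃ f, IsRDF (kneserGraph 11 3) f ∧
    ∑ v, f v = 10 := by
  classical
  refine ⟨fun v => if v.1 ∈ rdD0 then 2 else 0, ⟨?_, ?_⟩, ?_⟩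
  · intro v
    dsimp only
    split <;> omega
  · intro v hv
    dsimp only at hv
    have hvD : v.1 ∉ rdD0 := by
      intro h
      rw [if_pos h] at hv
      omega
    obtain ⟨t, ht, hdisj⟩ := rdD0_dominates v.1 v.2
    refine ⟨⟨t, rdD0_cards t ht⟩, (⟨?_, hdisj⟩ : v ≠ ⟨t, rdD0_cards t ht⟩ ∧ Disjoint v.1 t), if_pos ht⟩
    intro he
    exact hvD (by rw [he]; exact ht)
  · have : ∑ v : {s : Finset (Fin 11) // s.card = 3},
        (if v.1 ∈ rdD0 then 2 else 0) =
        ∑ v ∈ Finset.univ.filter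
          (fun v : {s : Finset (Fin 11) // s.card = 3} => v.1 ∈ rdD0), 2 :=
      (Finset.sum_filter _ _).symm
    rw [this, Finset.sum_const, smul_eq_mul]
    have himg : (Finset.univ.filter
        (fun v : {s : Finset (Fin 11) // s.card = 3} => v.1 ∈ rdD0)).image Subtype.val = rdD0 := by
      ext t
      simp only [Finset.mem_image, Finset.mem_filter, Finset.mem_univ, true_and]
      constructor
      · rintro ⟨v, hv, rfl⟩
        exact hv
      · intro ht
        exact ⟨⟨t, rdD0_cards t ht⟩, ht, rfl⟩
    have hcard : (Finset.univ.filter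
        (fun v : {s : Finset (Fin 11) // s.card = 3} => v.1 ∈ rdD0)).card = rdD0.card := by
      rw [← himg]
      exact (Finset.card_image_of_injective _ Subtype.val_injective).symm
    rw [hcard]
    rfl


end Aux

theorem kneser113_romanDomNum : romanDomNum (kneserGraph 11 3) = 10 := by
  have hmem : 10 ∈ {w | ∃ f, IsRDF (kneserGraph 11 3) f ∧ ∑ v, f v = w} := upperBound
  refine le_antisymm (Nat.sInf_le hmem) ?_
  apply le_csInf ⟨10, hmem⟩
  rintro w ⟨f, hf, rfl⟩
  exact lowerBound f hf
end
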